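/- arXiv:1004.2437 — 9 statements merged into one kernel-verified Lean document; each statement's English description precedes it below -/
import Mathlib

section
/- ∫₀¹ log(x)/(x²-x+1) dx = -(2/√3) ∑_{k=1}^∞ sin(πk/3)/k². -/
open Real MeasureTheory Set intervalIntegral

noncomputable section

private def cc (m : ℕ) : ℝ :=
  1 / (6 * (m : ℝ) + 1) ^ 2 + 1 / (6 * (m : ℝ) + 2) ^ 2
    - 1 / (6 * (m : ℝ) + 4) ^ 2 - 1 / (6 * (m : ℝ) + 5) ^ 2

private def gg (m : ℕ) (x : ℝ) : ℝ :=
  (x ^ (6 * m) + x ^ (6 * m + 1) - x ^ (6 * m + 3) - x ^ (6 * m + 4)) * Real.log x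

private lemma integrableOn_log01 : IntegrableOn Real.log (Ioc (0:ℝ) 1) volume := by
  have hg : IntegrableOn (fun x : ℝ => 2 * x ^ (-(1/2) : ℝ)) (Ioc (0:ℝ) 1) volume := by
    have h := intervalIntegrable_rpow' (a := 0) (b := 1) (r := -(1/2)) (by norm_num)
    rw [intervalIntegrable_iff_integrableOn_Ioc_of_le zero_le_one] at h
    exact h.const_mul 2
  refine hg.mono' Real.measurable_log.aestronglyMeasurable ?_
  rw [ae_restrict_iff' measurableSet_Ioc]
  filter_upwards with x hx
  have hx0 : 0 < x := hx.1
  have hlog : Real.log x ≤ 0 := Real.log_nonpos hx0.le hx.2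
  have h1 : (0:ℝ) < x ^ (-(1/2) : ℝ) := Real.rpow_pos_of_pos hx0 _
  have h2 : Real.log (x ^ (-(1/2) : ℝ)) ≤ x ^ (-(1/2) : ℝ) - 1 :=
    Real.log_le_sub_one_of_pos h1
  rw [Real.log_rpow hx0] at h2
  rw [Real.norm_eq_abs, abs_of_nonpos hlog]
  nlinarith

private lemma integrableOn_pow_log (n : ℕ) :
    IntegrableOn (fun x : ℝ => x ^ n * Real.log x) (Ioc (0:ℝ) 1) volume := by
  refine MeasureTheory.Integrable.mono integrableOn_log01
    ((measurable_id.pow_const n).mul Real.measurable_log).aestronglyMeasurable ?_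
  rw [ae_restrict_iff' measurableSet_Ioc]
  filter_upwards with x hx
  have hx0 : 0 < x := hx.1
  rw [Real.norm_eq_abs, Real.norm_eq_abs, abs_mul]
  have h1 : |x ^ n| ≤ 1 := by
    rw [abs_of_pos (pow_pos hx0 n)]
    exact pow_le_one₀ hx0.le hx.2
  nlinarith [abs_nonneg (Real.log x), abs_nonneg (x ^ n)]

private lemma intervalIntegrable_pow_log (n : ℕ) :
    IntervalIntegrable (fun x : ℝ => x ^ n * Real.log x) volume 0 1 := by
  rw [intervalIntegrable_iff_integrableOn_Ioc_of_le zero_le_one]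
  exact integrableOn_pow_log n

private lemma integral_pow_log (n : ℕ) :
    ∫ x in (0:ℝ)..1, x ^ n * Real.log x = -(1 / ((n:ℝ) + 1) ^ 2) := by
  have hne : ((n:ℝ) + 1) ≠ 0 := by positivity
  set F : ℝ → ℝ := fun x => x ^ (n+1) * Real.log x / ((n:ℝ)+1) - x ^ (n+1) / ((n:ℝ)+1)^2
    with hF
  have hcont : ContinuousOn F (Icc 0 1) := by
    have h1 : Continuous fun x : ℝ => x ^ n * (x * Real.log x) :=
      (continuous_pow n).mul Real.continuous_mul_log
    have hFe : F = fun x => x ^ n * (x * Real.log x) / ((n:ℝ)+1) - x ^ (n+1) / ((n:ℝ)+1)^2 := by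
      funext x; simp only [hF]; ring
    rw [hFe]
    exact ((h1.div_const _).sub ((continuous_pow _).div_const _)).continuousOn
  have hderiv : ∀ x ∈ Ioo (0:ℝ) 1, HasDerivAt F (x ^ n * Real.log x) x := by
    intro x hx
    have hx0 : x ≠ 0 := ne_of_gt hx.1
    have h1 : HasDerivAt (fun y : ℝ => y ^ (n+1) * Real.log y)
        ((↑(n+1) * x ^ n) * Real.log x + x ^ (n+1) * x⁻¹) x := by
      exact ((hasDerivAt_pow (n+1) x).mul (Real.hasDerivAt_log hx0)).congr_deriv (by simp)
    have h2 := (h1.div_const ((n:ℝ)+1)).sub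
      ((hasDerivAt_pow (n+1) x).div_const (((n:ℝ)+1)^2))
    refine HasDerivAt.congr_deriv h2 ?_
    have hxx : x ^ (n+1) * x⁻¹ = x ^ n := by
      rw [pow_succ]; field_simp
    rw [hxx]
    push_cast
    field_simp
    ring
  have := integral_eq_sub_of_hasDerivAt_of_le zero_le_one hcont hderiv
    (intervalIntegrable_pow_log n)
  rw [this]
  simp [hF]

private lemma gg_eq (m : ℕ) : gg m = fun x =>
    (x ^ (6*m) * Real.log x + x ^ (6*m+1) * Real.log x)
      - (x ^ (6*m+3) * Real.log x + x ^ (6*m+4) * Real.log x) := by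
  funext x; simp only [gg]; ring

private lemma integrableOn_gg (m : ℕ) : IntegrableOn (gg m) (Ioc (0:ℝ) 1) volume := by
  rw [gg_eq]
  exact ((integrableOn_pow_log _).add (integrableOn_pow_log _)).sub
    ((integrableOn_pow_log _).add (integrableOn_pow_log _))

private lemma integral_gg (m : ℕ) : ∫ x in Ioc (0:ℝ) 1, gg m x = -(cc m) := by
  rw [← integral_of_le zero_le_one]
  have h1 := intervalIntegrable_pow_log (6*m)
  have h2 := intervalIntegrable_pow_log (6*m+1)
  have h3 := intervalIntegrable_pow_log (6*m+3)
  have h4 := intervalIntegrable_pow_log (6*m+4)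
  rw [gg_eq, integral_sub (h1.add h2) (h3.add h4), integral_add h1 h2, integral_add h3 h4,
    integral_pow_log, integral_pow_log, integral_pow_log, integral_pow_log]
  simp only [cc]
  push_cast
  ring

private lemma gg_nonpos {m : ℕ} {x : ℝ} (hx : x ∈ Ioc (0:ℝ) 1) : gg m x ≤ 0 := by
  have hx0 : 0 < x := hx.1
  have h1 : x ^ (6*m+3) ≤ x ^ (6*m) := pow_le_pow_of_le_one hx0.le hx.2 (by omega)
  have h2 : x ^ (6*m+4) ≤ x ^ (6*m+1) := pow_le_pow_of_le_one hx0.le hx.2 (by omega)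
  have hlog : Real.log x ≤ 0 := Real.log_nonpos hx0.le hx.2
  have hpoly : 0 ≤ x ^ (6*m) + x ^ (6*m+1) - x ^ (6*m+3) - x ^ (6*m+4) := by linarith
  exact mul_nonpos_of_nonneg_of_nonpos hpoly hlog

private lemma integral_norm_gg (m : ℕ) : ∫ x in Ioc (0:ℝ) 1, ‖gg m x‖ = cc m := by
  have h : EqOn (fun x => ‖gg m x‖) (fun x => -(gg m x)) (Ioc (0:ℝ) 1) := by
    intro x hx
    simp only [Real.norm_eq_abs, abs_of_nonpos (gg_nonpos hx)]
  rw [setIntegral_congr_fun measurableSet_Ioc h, MeasureTheory.integral_neg, integral_gg]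
  ring

private lemma hsum_aux : Summable (fun m : ℕ => 1 / ((m:ℝ) + 1) ^ 2) := by
  have h : Summable (fun n : ℕ => 1 / (n:ℝ) ^ 2) :=
    Real.summable_one_div_nat_pow.mpr one_lt_two
  have h2 := (summable_nat_add_iff 1).mpr h
  refine h2.congr fun n => ?_
  push_cast
  ring

private lemma cc_nonneg (m : ℕ) : 0 ≤ cc m := by
  have hm : (0:ℝ) ≤ m := Nat.cast_nonneg m
  have h1 : 1 / (6*(m:ℝ)+4)^2 ≤ 1 / (6*(m:ℝ)+1)^2 := by
    apply one_div_le_one_div_of_le (by positivity)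
    nlinarith
  have h2 : 1 / (6*(m:ℝ)+5)^2 ≤ 1 / (6*(m:ℝ)+2)^2 := by
    apply one_div_le_one_div_of_le (by positivity)
    nlinarith
  simp only [cc]; linarith

private lemma cc_le (m : ℕ) : cc m ≤ 2 * (1 / ((m:ℝ) + 1) ^ 2) := by
  have hm : (0:ℝ) ≤ m := Nat.cast_nonneg m
  have h1 : 1 / (6*(m:ℝ)+1)^2 ≤ 1 / ((m:ℝ)+1)^2 := by
    apply one_div_le_one_div_of_le (by positivity)
    nlinarith
  have h2 : 1 / (6*(m:ℝ)+2)^2 ≤ 1 / ((m:ℝ)+1)^2 := by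
    apply one_div_le_one_div_of_le (by positivity)
    nlinarith
  have h3 : (0:ℝ) < (6*(m:ℝ)+4)^2 := by positivity
  have h4 : (0:ℝ) < (6*(m:ℝ)+5)^2 := by positivity
  have h5 : (0:ℝ) ≤ 1 / (6*(m:ℝ)+4)^2 := by positivity
  have h6 : (0:ℝ) ≤ 1 / (6*(m:ℝ)+5)^2 := by positivity
  simp only [cc]; linarith

private lemma summable_cc : Summable cc :=
  Summable.of_nonneg_of_le cc_nonneg cc_le (hsum_aux.mul_left 2)

private lemma tsum_gg {x : ℝ} (hx : x ∈ Ioc (0:ℝ) 1) :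
    ∑' m, gg m x = Real.log x / (x ^ 2 - x + 1) := by
  have hx0 : 0 < x := hx.1
  rcases eq_or_lt_of_le hx.2 with h1 | h1
  · rw [h1]
    simp [gg]
  · have hlt : x ^ 6 < 1 := pow_lt_one₀ hx0.le h1 (by norm_num)
    have hgeo : ∑' m : ℕ, (x ^ 6) ^ m = (1 - x ^ 6)⁻¹ :=
      tsum_geometric_of_lt_one (by positivity) hlt
    have hterm : ∀ m, gg m x = (x ^ 6) ^ m * ((1 + x - x ^ 3 - x ^ 4) * Real.log x) := by
      intro m
      simp only [gg, pow_add, pow_mul]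
      ring
    rw [tsum_congr hterm, tsum_mul_right, hgeo]
    have hq : (0:ℝ) < x ^ 2 - x + 1 := by nlinarith [sq_nonneg (x - 1/2)]
    have h6 : 1 - x ^ 6 ≠ 0 := ne_of_gt (by linarith)
    rw [show (1 - x ^ 6) = (1 + x - x ^ 3 - x ^ 4) * (x ^ 2 - x + 1) by ring] at h6 ⊢
    have h7 : 1 + x - x ^ 3 - x ^ 4 ≠ 0 := left_ne_zero_of_mul h6
    rw [div_eq_mul_inv, mul_inv, mul_comm (1 + x - x ^ 3 - x ^ 4)⁻¹ (x ^ 2 - x + 1)⁻¹, mul_assoc,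
      inv_mul_cancel_left₀ h7, mul_comm]

private lemma lhs_eq :
    ∫ x in (0:ℝ)..1, Real.log x / (x ^ 2 - x + 1) = -∑' m, cc m := by
  rw [integral_of_le zero_le_one]
  have h1 : ∫ x in Ioc (0:ℝ) 1, Real.log x / (x ^ 2 - x + 1)
      = ∫ x in Ioc (0:ℝ) 1, ∑' m, gg m x :=
    setIntegral_congr_fun measurableSet_Ioc fun x hx => (tsum_gg hx).symm
  have hmeas : ∀ m : ℕ, AEStronglyMeasurable (gg m) (volume.restrict (Ioc (0:ℝ) 1)) := by
    intro m
    exact (((measurable_id.pow_const (6*m)).add (measurable_id.pow_const (6*m+1))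
      |>.sub (measurable_id.pow_const (6*m+3)) |>.sub
        (measurable_id.pow_const (6*m+4))).mul Real.measurable_log).aestronglyMeasurable
  have hnorm : ∑' m : ℕ, ∫⁻ x in Ioc (0:ℝ) 1, ‖gg m x‖₊ ≠ ⊤ := by
    have key : ∀ m : ℕ, ∫⁻ x in Ioc (0:ℝ) 1, ‖gg m x‖₊ = ENNReal.ofReal (cc m) := by
      intro m
      have := ofReal_integral_norm_eq_lintegral_enorm (integrableOn_gg m)
      rw [integral_norm_gg] at this
      exact this.symm
    rw [tsum_congr key, ← ENNReal.ofReal_tsum_of_nonneg cc_nonneg summable_cc]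
    exact ENNReal.ofReal_ne_top
  rw [h1, MeasureTheory.integral_tsum hmeas hnorm, tsum_congr integral_gg, tsum_neg]

private lemma sin_shift (m : ℕ) (r : ℝ) :
    Real.sin (Real.pi * (6 * m + r) / 3) = Real.sin (Real.pi * r / 3) := by
  have h : Real.pi * (6 * (m:ℝ) + r) / 3 = Real.pi * r / 3 + (m : ℤ) * (2 * Real.pi) := by
    push_cast; ring
  rw [h, Real.sin_add_int_mul_two_pi]

private lemma sin_val (j : ℕ) (m : ℕ) :
    Real.sin (Real.pi * ((6 * (m:ℝ) + j) + 1) / 3)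
      = Real.sin (Real.pi * ((j:ℝ) + 1) / 3) := by
  have := sin_shift m ((j:ℝ) + 1)
  rw [← this]; ring_nf

set_option maxHeartbeats 1000000 in
private lemma rhs_sum :
    ∑' k : ℕ, Real.sin (Real.pi * (k + 1) / 3) / ((k : ℝ) + 1) ^ 2
      = Real.sqrt 3 / 2 * ∑' m, cc m := by
  set f : ℕ → ℝ := fun k => Real.sin (Real.pi * (k + 1) / 3) / ((k : ℝ) + 1) ^ 2 with hf
  have hsf : Summable f := by
    have hb : ∀ k : ℕ, |f k| ≤ 1 / ((k:ℝ) + 1) ^ 2 := by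
      intro k
      rw [hf]
      rw [abs_div, abs_of_pos (show (0:ℝ) < ((k:ℝ)+1)^2 by positivity)]
      gcongr
      exact Real.abs_sin_le_one _
    exact (Summable.of_nonneg_of_le (fun k => abs_nonneg _) hb hsum_aux).of_abs
  have he := ((Nat.divModEquiv 6).symm.tsum_eq f).symm
  have hsp : Summable (fun p : ℕ × Fin 6 => f ((Nat.divModEquiv 6).symm p)) :=
    ((Nat.divModEquiv 6).symm.summable_iff).mpr hsf
  rw [he, Summable.tsum_prod' hsp (fun b => Summable.of_finite)]
  have hinner : ∀ m : ℕ, ∑' j : Fin 6, f ((Nat.divModEquiv 6).symm (m, j))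
      = Real.sqrt 3 / 2 * cc m := by
    intro m
    rw [tsum_fintype]
    have hv : ∀ j : Fin 6, f ((Nat.divModEquiv 6).symm (m, j))
        = Real.sin (Real.pi * (((j:ℕ):ℝ) + 1) / 3) / ((6 * (m:ℝ) + ((j:ℕ):ℝ)) + 1) ^ 2 := by
      intro j
      have hc : (((Nat.divModEquiv 6).symm (m, j) : ℕ) : ℝ) = 6 * (m:ℝ) + ((j:ℕ):ℝ) := by
        simp [Nat.divModEquiv]
        ring
      rw [hf]
      simp only [hc]
      rw [sin_val]
    rw [Fin.sum_univ_six, hv 0, hv 1, hv 2, hv 3, hv 4, hv 5]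
    norm_num [show ((3:Fin 6):ℕ) = 3 from rfl, show ((4:Fin 6):ℕ) = 4 from rfl,
      show ((5:Fin 6):ℕ) = 5 from rfl]
    have s2 : Real.sin (Real.pi * 2 / 3) = Real.sqrt 3 / 2 := by
      rw [show Real.pi * 2 / 3 = Real.pi - Real.pi / 3 by ring, Real.sin_pi_sub,
        Real.sin_pi_div_three]
    have s4 : Real.sin (Real.pi * 4 / 3) = -(Real.sqrt 3 / 2) := by
      rw [show Real.pi * 4 / 3 = Real.pi / 3 + Real.pi by ring, Real.sin_add_pi,
        Real.sin_pi_div_three]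
    have s5 : Real.sin (Real.pi * 5 / 3) = -(Real.sqrt 3 / 2) := by
      rw [show Real.pi * 5 / 3 = -(Real.pi / 3) + 2 * Real.pi by ring,
        Real.sin_add_two_pi, Real.sin_neg, Real.sin_pi_div_three]
    have s6 : Real.sin (Real.pi * 6 / 3) = 0 := by
      rw [show Real.pi * 6 / 3 = 2 * Real.pi by ring, Real.sin_two_pi]
    rw [s2, s4, s5, s6]
    have hm : (0:ℝ) ≤ m := Nat.cast_nonneg m
    simp only [cc]
    have h1 : (6 * (m:ℝ) + 1) ^ 2 ≠ 0 := by positivity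
    have h2 : (6 * (m:ℝ) + 2) ^ 2 ≠ 0 := by positivity
    have h4 : (6 * (m:ℝ) + 4) ^ 2 ≠ 0 := by positivity
    have h5 : (6 * (m:ℝ) + 5) ^ 2 ≠ 0 := by positivity
    field_simp
    ring
  rw [tsum_congr hinner, tsum_mul_left]

theorem stmt2 :
    ∫ x in (0:ℝ)..1, Real.log x / (x ^ 2 - x + 1) =
      -(2 / Real.sqrt 3) * ∑' k : ℕ, Real.sin (Real.pi * (k + 1) / 3) / ((k : ℝ) + 1) ^ 2 := by
  rw [lhs_eq, rhs_sum]
  have h3 : Real.sqrt 3 ≠ 0 := by positivity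
  field_simp

end
end

section
/- ∫₀¹ log(x)/(x²-x+1) dx = 2π²/9 - (1/3)ψ'(1/3). -/
open Real MeasureTheory Set Filter intervalIntegral
open scoped Topology

/-- The trigamma function `ψ'(x) = ∑_{k=0}^∞ 1/(x+k)²`. -/
noncomputable def trigamma (x : ℝ) : ℝ := ∑' k : ℕ, 1 / (x + k) ^ 2

namespace Stmt4Aux

lemma hasSum_congr' {f g : ℕ → ℝ} {a : ℝ} (h : HasSum f a) (he : ∀ n, f n = g n) :
    HasSum g a := (funext he : f = g) ▸ h

noncomputable def Fa (k : ℕ) (x : ℝ) : ℝ :=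
  x ^ (k+1) * ((k+1) * Real.log x - 1) / ((k:ℝ)+1)^2

lemma hasDerivAt_Fa (k : ℕ) {x : ℝ} (hx : x ≠ 0) :
    HasDerivAt (Fa k) (x ^ k * Real.log x) x := by
  have h1 : HasDerivAt (fun x : ℝ => x ^ (k+1)) ((k+1 : ℕ) * x ^ k) x := hasDerivAt_pow (k+1) x
  have h2 : HasDerivAt (fun x : ℝ => ((k:ℝ)+1) * Real.log x - 1) (((k:ℝ)+1) * x⁻¹) x :=
    ((Real.hasDerivAt_log hx).const_mul _).sub_const 1
  have h3 := (h1.mul h2).div_const (((k:ℝ)+1)^2)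
  convert! h3 using 1
  have hk : ((k:ℝ)+1) ≠ 0 := by positivity
  field_simp
  push_cast
  ring

lemma pow_mul_log_integrableOn_and (k : ℕ) :
    IntegrableOn (fun x => x ^ k * Real.log x) (Ioc (0:ℝ) 1) volume ∧
    ∫ x in Ioc (0:ℝ) 1, x ^ k * Real.log x = -(1/((k:ℝ)+1)^2) := by
  set f : ℝ → ℝ := fun x => x ^ k * Real.log x with hf
  set a : ℕ → ℝ := fun n => 1/((n:ℝ)+1) with ha
  have ha_mem : ∀ n, a n ∈ Ioc (0:ℝ) 1 := by
    intro n
    constructor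
    · positivity
    · rw [div_le_one (by positivity)]
      linarith [Nat.cast_nonneg (α := ℝ) n]
  have ha_tendsto : Tendsto a atTop (𝓝 0) := tendsto_one_div_add_atTop_nhds_zero_nat
  have hcont : ∀ n, ContinuousOn f (uIcc (a n) 1) := by
    intro n
    apply ContinuousOn.mul (by fun_prop)
    apply Real.continuousOn_log.mono
    intro x hx
    have := (ha_mem n).1
    simp only [mem_compl_iff, mem_singleton_iff]
    have : (0:ℝ) < min (a n) 1 := lt_min (ha_mem n).1 one_pos
    have hx' := hx.1
    rw [uIcc] at hx
    intro h; rw [h] at hx; exact absurd hx.1 (by simpa using this)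
  have hFTC : ∀ n, ∫ x in (a n)..1, f x = Fa k 1 - Fa k (a n) := by
    intro n
    apply integral_eq_sub_of_hasDerivAt
    · intro x hx
      apply hasDerivAt_Fa
      have : (0:ℝ) < min (a n) 1 := lt_min (ha_mem n).1 one_pos
      have := hx.1
      rw [uIcc] at hx
      exact ne_of_gt (lt_of_lt_of_le ‹(0:ℝ) < min (a n) 1› hx.1)
    · exact (hcont n).intervalIntegrable
  have hFa1 : Fa k 1 = -(1/((k:ℝ)+1)^2) := by
    unfold Fa
    norm_num
    rw [neg_div, one_div]
  have hFaa : Tendsto (fun n => Fa k (a n)) atTop (𝓝 0) := by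
    have h1 : Tendsto (fun x : ℝ => Real.log x * x ^ ((k:ℝ)+1)) (𝓝[>] 0) (𝓝 0) :=
      tendsto_log_mul_rpow_nhdsGT_zero (by positivity)
    have h2 : Tendsto (fun x : ℝ => x ^ (k+1)) (𝓝[>] (0:ℝ)) (𝓝 0) := by
      have := ((continuous_pow (k+1)).tendsto (0:ℝ)).mono_left
        (nhdsWithin_le_nhds (s := Ioi (0:ℝ)))
      simpa using this
    have h3 : Tendsto (fun x : ℝ => Fa k x) (𝓝[>] 0) (𝓝 0) := by
      have h4 : Tendsto (fun x : ℝ => (((k:ℝ)+1) * (Real.log x * x ^ ((k:ℝ)+1)) - x ^ (k+1)) / ((k:ℝ)+1)^2)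
          (𝓝[>] 0) (𝓝 0) := by
        have := ((h1.const_mul ((k:ℝ)+1)).sub h2).div_const (((k:ℝ)+1)^2)
        simpa using this
      apply h4.congr'
      filter_upwards [self_mem_nhdsWithin] with x hx
      have hx' : (0:ℝ) < x := hx
      rw [Fa, show ((k:ℝ)+1) = ((k+1:ℕ):ℝ) by push_cast; ring, Real.rpow_natCast]
      push_cast
      ring
    have haS : Tendsto a atTop (𝓝[>] (0:ℝ)) :=
      tendsto_nhdsWithin_of_tendsto_nhds_of_eventually_within _ ha_tendsto
        (Eventually.of_forall fun n => (ha_mem n).1)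
    exact h3.comp haS
  have hnorm : ∀ n, ∫ x in Ioc (a n) 1, ‖f x‖ = Fa k (a n) - Fa k 1 := by
    intro n
    have he : ∀ x ∈ Ioc (a n) 1, ‖f x‖ = -f x := by
      intro x hx
      have hx0 : 0 < x := lt_of_le_of_lt (le_of_lt (ha_mem n).1) hx.1
      have : Real.log x ≤ 0 := Real.log_nonpos (le_of_lt hx0) hx.2
      have : f x ≤ 0 := mul_nonpos_of_nonneg_of_nonpos (by positivity) this
      rw [Real.norm_eq_abs, abs_of_nonpos this]
    rw [setIntegral_congr_fun measurableSet_Ioc he, MeasureTheory.integral_neg,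
      ← intervalIntegral.integral_of_le (ha_mem n).2, hFTC n]
    ring
  have hint : ∀ n, IntegrableOn f (Ioc (a n) 1) volume := by
    intro n
    exact (intervalIntegrable_iff_integrableOn_Ioc_of_le (ha_mem n).2).mp
      ((hcont n).intervalIntegrable (μ := volume))
  have hnt : Tendsto (fun n => ∫ x in Ioc (a n) 1, ‖f x‖) atTop (𝓝 (1/((k:ℝ)+1)^2)) := by
    simp_rw [hnorm, hFa1, sub_neg_eq_add]
    have h := hFaa.add (tendsto_const_nhds (x := 1/((k:ℝ)+1)^2))
    rw [zero_add] at h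
    exact h
  have hintOn : IntegrableOn f (Ioc (0:ℝ) 1) volume := by
    rcases hnt.isBoundedUnder_le with ⟨I, hI⟩
    exact integrableOn_Ioc_of_intervalIntegral_norm_bounded_left hint ha_tendsto
      (by simpa [Filter.EventuallyLE] using hI)
  refine ⟨hintOn, ?_⟩
  have hcover : AECover (volume.restrict (Ioc (0:ℝ) 1)) atTop (fun n => Ioc (a n) 1) :=
    aecover_Ioc_of_Ioc ha_tendsto tendsto_const_nhds
  have hval : Tendsto (fun n => ∫ x in Ioc (a n) 1, f x ∂(volume.restrict (Ioc (0:ℝ) 1)))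
      atTop (𝓝 (-(1/((k:ℝ)+1)^2))) := by
    have heq : ∀ n, ∫ x in Ioc (a n) 1, f x ∂(volume.restrict (Ioc (0:ℝ) 1))
        = ∫ x in Ioc (a n) 1, f x := by
      intro n
      rw [Measure.restrict_restrict measurableSet_Ioc,
        show Ioc (a n) 1 ∩ Ioc (0:ℝ) 1 = Ioc (a n) 1 from
          inter_eq_left.mpr (fun x hx => ⟨lt_trans (ha_mem n).1 hx.1, hx.2⟩)]
    have heq2 : ∀ n, ∫ x in Ioc (a n) 1, f x = Fa k 1 - Fa k (a n) := fun n =>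
      (intervalIntegral.integral_of_le (ha_mem n).2).symm.trans (hFTC n)
    simp_rw [heq, heq2, hFa1]
    have h := (tendsto_const_nhds (x := -(1/((k:ℝ)+1)^2))).sub hFaa
    rw [sub_zero] at h
    exact h
  exact hcover.integral_eq_of_tendsto _ hintOn hval

noncomputable def aa (k : ℕ) : ℝ := 1/(3*(k:ℝ)+1)^2
noncomputable def bb (k : ℕ) : ℝ := 1/(3*(k:ℝ)+2)^2

lemma summable_base : Summable (fun n : ℕ => (1:ℝ)/(n:ℝ)^2) := hasSum_zeta_two.summable

lemma summable_aa : Summable aa := by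
  have h := summable_base.comp_injective (i := fun k : ℕ => 3*k+1) (fun x y h => by dsimp at h; omega)
  apply h.congr
  intro k
  simp only [Function.comp_apply, aa]
  push_cast
  ring_nf

lemma summable_bb : Summable bb := by
  have h := summable_base.comp_injective (i := fun k : ℕ => 3*k+2) (fun x y h => by dsimp at h; omega)
  apply h.congr
  intro k
  simp only [Function.comp_apply, bb]
  push_cast
  ring_nf

lemma mod3_split : (∑' k, aa k) + (∑' k, bb k) = 4*Real.pi^2/27 := by
  have h := hasSum_zeta_two
  have h1 := ((Nat.divModEquiv 3).symm.hasSum_iff).mpr h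
  have h2 := ((Equiv.prodComm (Fin 3) ℕ).hasSum_iff).mpr h1
  have hg : HasSum (fun r : Fin 3 => ![Real.pi^2/54, ∑' k, aa k, ∑' k, bb k] r) (Real.pi^2/6) := by
    apply h2.prod_fiberwise
    intro r
    fin_cases r
    · have h0 : HasSum (fun q : ℕ => (1/9) * ((1:ℝ)/(q:ℝ)^2)) (Real.pi^2/54) := by
        have := hasSum_zeta_two.mul_left (1/9 : ℝ)
        convert! this using 1
        ring
      apply hasSum_congr' h0
      intro q
      simp [Nat.divModEquiv]
      ring_nf
    · apply hasSum_congr' summable_aa.hasSum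
      intro q
      simp [Nat.divModEquiv, aa]
      ring_nf
    · apply hasSum_congr' summable_bb.hasSum
      intro q
      simp [Nat.divModEquiv, bb]
      ring_nf
  have h3 := hg.tsum_eq
  rw [tsum_fintype, Fin.sum_univ_three] at h3
  simp only [Matrix.cons_val_zero, Matrix.cons_val_one, Matrix.head_cons, Matrix.cons_val_two, Matrix.tail_cons] at h3
  linarith

lemma aa_odd : HasSum (fun k => aa (2*k+1)) ((∑' k, bb k)/4) := by
  apply hasSum_congr' (summable_bb.hasSum.div_const 4)
  intro k
  simp only [aa, bb]
  push_cast
  have ha : (3*(k:ℝ)+2) ≠ 0 := by positivity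
  have hb : (3*(2*(k:ℝ)+1)+1) ≠ 0 := by positivity
  field_simp
  ring

lemma bb_even : HasSum (fun k => bb (2*k)) ((∑' k, aa k)/4) := by
  apply hasSum_congr' (summable_aa.hasSum.div_const 4)
  intro k
  simp only [aa, bb]
  push_cast
  have ha : (3*(k:ℝ)+1) ≠ 0 := by positivity
  have hb : (3*(2*(k:ℝ))+2) ≠ 0 := by positivity
  field_simp
  ring

lemma summable_aa_even : Summable (fun k => aa (2*k)) :=
  summable_aa.comp_injective (fun x y h => by omega)

lemma summable_bb_odd : Summable (fun k => bb (2*k+1)) :=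
  summable_bb.comp_injective (fun x y h => by omega)

lemma A1_eq : (∑' k, aa (2*k)) = (∑' k, aa k) - (∑' k, bb k)/4 := by
  have h := HasSum.even_add_odd summable_aa_even.hasSum aa_odd
  have := summable_aa.hasSum.unique h
  linarith

lemma B5_eq : (∑' k, bb (2*k+1)) = (∑' k, bb k) - (∑' k, aa k)/4 := by
  have h := HasSum.even_add_odd bb_even summable_bb_odd.hasSum
  have := summable_bb.hasSum.unique h
  linarith

lemma alt_hasSum : HasSum (fun n => (-1:ℝ)^n * (aa n + bb n))
    (((∑' k, aa (2*k)) + (∑' k, aa k)/4) + -((∑' k, bb k)/4 + (∑' k, bb (2*k+1)))) := by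
  apply HasSum.even_add_odd
  · apply hasSum_congr' (summable_aa_even.hasSum.add bb_even)
    intro k
    rw [pow_mul]
    norm_num
  · apply hasSum_congr' ((aa_odd.add summable_bb_odd.hasSum).neg)
    intro k
    rw [pow_succ, pow_mul]
    norm_num

lemma key : ∫ x in Ioc (0:ℝ) 1, Real.log x / (x^2 - x + 1)
    = 2*Real.pi^2/9 - 3*(∑' k, aa k) := by
  set G : ℕ → ℝ → ℝ := fun n x => (-1:ℝ)^n * (x^(3*n) * Real.log x + x^(3*n+1) * Real.log x)
    with hG
  have hGint : ∀ n, Integrable (G n) (volume.restrict (Ioc (0:ℝ) 1)) := fun n =>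
    ((pow_mul_log_integrableOn_and (3*n)).1.add
      (pow_mul_log_integrableOn_and (3*n+1)).1).const_mul _
  have hval : ∀ n, ∫ x in Ioc (0:ℝ) 1, G n x = -((-1:ℝ)^n * (aa n + bb n)) := by
    intro n
    rw [hG]
    simp only
    rw [MeasureTheory.integral_const_mul,
      MeasureTheory.integral_add (pow_mul_log_integrableOn_and (3*n)).1
        (pow_mul_log_integrableOn_and (3*n+1)).1,
      (pow_mul_log_integrableOn_and (3*n)).2, (pow_mul_log_integrableOn_and (3*n+1)).2,
      aa, bb]
    push_cast
    ring
  have hnorm : ∀ n, ∫ x in Ioc (0:ℝ) 1, ‖G n x‖ = aa n + bb n := by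
    intro n
    have he : ∀ x ∈ Ioc (0:ℝ) 1, ‖G n x‖
        = -(x^(3*n) * Real.log x + x^(3*n+1) * Real.log x) := by
      intro x hx
      have hx0 : 0 < x := hx.1
      have hlog : Real.log x ≤ 0 := Real.log_nonpos (le_of_lt hx0) hx.2
      have h1 : x^(3*n) * Real.log x ≤ 0 := mul_nonpos_of_nonneg_of_nonpos (by positivity) hlog
      have h2 : x^(3*n+1) * Real.log x ≤ 0 := mul_nonpos_of_nonneg_of_nonpos (by positivity) hlog
      rw [hG]
      simp only
      rw [norm_mul, norm_pow, norm_neg, norm_one, one_pow, one_mul, Real.norm_eq_abs,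
        abs_of_nonpos (by linarith)]
    rw [setIntegral_congr_fun measurableSet_Ioc he, MeasureTheory.integral_neg,
      MeasureTheory.integral_add (pow_mul_log_integrableOn_and (3*n)).1
        (pow_mul_log_integrableOn_and (3*n+1)).1,
      (pow_mul_log_integrableOn_and (3*n)).2, (pow_mul_log_integrableOn_and (3*n+1)).2,
      aa, bb]
    push_cast
    ring
  have hsum : Summable (fun n => ∫ x in Ioc (0:ℝ) 1, ‖G n x‖) := by
    simp_rw [hnorm]
    exact summable_aa.add summable_bb
  have hswap := integral_tsum_of_summable_integral_norm hGint hsum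
  have hpoint : ∀ x ∈ Ioc (0:ℝ) 1, Real.log x / (x^2 - x + 1) = ∑' n, G n x := by
    intro x hx
    rcases eq_or_lt_of_le hx.2 with h1 | h1
    · rw [h1]
      simp [hG, Real.log_one]
    · have hx0 : (0:ℝ) < x := hx.1
      have hlt : ‖-x^3‖ < 1 := by
        rw [norm_neg, norm_pow, Real.norm_eq_abs, abs_of_pos hx0]
        exact pow_lt_one₀ (le_of_lt hx0) h1 (by norm_num)
      have hgeo := hasSum_geometric_of_norm_lt_one hlt
      have hmul := hgeo.mul_right ((1+x) * Real.log x)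
      have hc : HasSum (fun n => G n x) ((1 - -x^3)⁻¹ * ((1+x) * Real.log x)) := by
        apply hasSum_congr' hmul
        intro n
        rw [hG]
        simp only
        rw [neg_pow, ← pow_mul]
        ring
      rw [hc.tsum_eq]
      have hden : (0:ℝ) < x^2 - x + 1 := by nlinarith [sq_nonneg (x-1)]
      have hden2 : (0:ℝ) < 1 + x^3 := by positivity
      rw [sub_neg_eq_add]
      rw [inv_eq_one_div]
      rw [div_eq_iff hden.ne']
      field_simp
      ring
  rw [setIntegral_congr_fun measurableSet_Ioc hpoint, ← hswap, tsum_congr hval, tsum_neg,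
    alt_hasSum.tsum_eq, A1_eq, B5_eq]
  have := mod3_split
  linarith

end Stmt4Aux

theorem stmt4 :
    ∫ x in (0:ℝ)..1, Real.log x / (x ^ 2 - x + 1) =
      2 * Real.pi ^ 2 / 9 - (1 / 3) * trigamma (1/3) := by
  have htri : trigamma (1/3) = 9 * (∑' k, Stmt4Aux.aa k) := by
    rw [trigamma, ← tsum_mul_left]
    apply tsum_congr
    intro k
    rw [Stmt4Aux.aa]
    have hk : (3*(k:ℝ)+1) ≠ 0 := by positivity
    have h3 : ((1:ℝ)/3 + k) = (3*k+1)/3 := by ring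
    rw [h3, div_pow, one_div_div, mul_one_div]
    norm_num
  rw [intervalIntegral.integral_of_le zero_le_one, Stmt4Aux.key, htri]
  ring
end

section
/- ∫₀¹ x·log(x)/(x²+x+1) dx = -7π²/54 + (1/9)ψ'(1/3). -/
open Real MeasureTheory Filter Set
open scoped ENNReal NNReal

lemma int_pow_log (n : ℕ) (hn : 1 ≤ n) :
    ∫ x in (0:ℝ)..1, x ^ n * Real.log x = -(1 / ((n:ℝ) + 1) ^ 2) := by
  have hcont : Continuous fun x : ℝ => x ^ n * Real.log x := by
    have : (fun x : ℝ => x ^ n * Real.log x) = fun x => x ^ (n - 1) * (x * Real.log x) := by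
      funext x
      rw [← mul_assoc, ← pow_succ, Nat.sub_add_cancel hn]
    rw [this]
    exact (continuous_pow _).mul Real.continuous_mul_log
  have hF : Continuous fun x : ℝ =>
      x ^ (n + 1) * Real.log x / ((n:ℝ) + 1) - x ^ (n + 1) / ((n:ℝ) + 1) ^ 2 := by
    have h1 : Continuous fun x : ℝ => x ^ (n + 1) * Real.log x := by
      have : (fun x : ℝ => x ^ (n + 1) * Real.log x) = fun x => x ^ n * (x * Real.log x) := by
        funext x; rw [← mul_assoc, ← pow_succ]
      rw [this]; exact (continuous_pow _).mul Real.continuous_mul_log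
    exact (h1.div_const _).sub ((continuous_pow _).div_const _)
  have hne : ((n:ℝ) + 1) ≠ 0 := by positivity
  have key := intervalIntegral.integral_eq_sub_of_hasDeriv_right_of_le (f := fun x : ℝ =>
      x ^ (n + 1) * Real.log x / ((n:ℝ) + 1) - x ^ (n + 1) / ((n:ℝ) + 1) ^ 2)
      (f' := fun x : ℝ => x ^ n * Real.log x) (by norm_num) hF.continuousOn
      (fun x hx => by
        have hx0 : x ≠ 0 := ne_of_gt hx.1
        have h := (((hasDerivAt_pow (n+1) x).mul (Real.hasDerivAt_log hx0)).div_const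
            ((n:ℝ) + 1)).sub ((hasDerivAt_pow (n+1) x).div_const (((n:ℝ) + 1) ^ 2))
        push_cast at h
        refine HasDerivAt.hasDerivWithinAt ?_
        convert h using 1
        · rfl
        · rw [pow_succ, mul_assoc (x ^ n) x, mul_inv_cancel₀ hx0]
          field_simp
          ring)
      (hcont.intervalIntegrable 0 1)
  rw [key]
  simp [hne]

lemma hS : HasSum (fun n : ℕ => 1 / ((n:ℝ) + 1) ^ 2) (π ^ 2 / 6) := by
  have h := hasSum_zeta_two
  rw [← hasSum_nat_add_iff' 1] at h
  simpa using h

lemma series_val :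
    ∑' k : ℕ, (1 / ((3*(k:ℝ)+3)) ^ 2 - 1 / ((3*(k:ℝ)+2)) ^ 2) =
      -(7 * π ^ 2 / 54) + (1 / 9) * trigamma (1/3) := by
  set a : ℕ → ℝ := fun k => 1 / (3*(k:ℝ)+1) ^ 2 with ha_def
  set b : ℕ → ℝ := fun k => 1 / (3*(k:ℝ)+2) ^ 2 with hb_def
  set c : ℕ → ℝ := fun k => 1 / (3*(k:ℝ)+3) ^ 2 with hc_def
  have hle : ∀ (k : ℕ) (d : ℝ), 1 ≤ d → d ≤ 3 → 1 / (3*(k:ℝ)+d) ^ 2 ≤ 1 / ((k:ℝ)+1) ^ 2 := by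
    intro k d h1 h3
    apply one_div_le_one_div_of_le (by positivity)
    have : (k:ℝ) + 1 ≤ 3*(k:ℝ) + d := by
      have : (0:ℝ) ≤ k := Nat.cast_nonneg k
      linarith
    exact pow_le_pow_left₀ (by positivity) this 2
  have ha : Summable a :=
    Summable.of_nonneg_of_le (fun k => by positivity)
      (fun k => hle k 1 le_rfl (by norm_num)) hS.summable
  have hb : Summable b :=
    Summable.of_nonneg_of_le (fun k => by positivity)
      (fun k => hle k 2 (by norm_num) (by norm_num)) hS.summable
  have hc : HasSum c (π ^ 2 / 54) := by
    have h := hS.mul_left (1/9)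
    have : (fun n : ℕ => (1/9) * (1 / ((n:ℝ) + 1) ^ 2)) = c := by
      funext k
      simp only [hc_def]
      have h9 : (3*(k:ℝ)+3) ^ 2 = 9 * ((k:ℝ)+1) ^ 2 := by ring
      rw [h9]
      field_simp
    rw [this, show (1/9 : ℝ) * (π ^ 2 / 6) = π ^ 2 / 54 by ring] at h
    exact h
  have htriple : HasSum (fun k => a k + b k + c k) (π ^ 2 / 6) := by
    rw [hasSum_iff_tendsto_nat_of_nonneg (fun k => by positivity)]
    have hpartial : ∀ n : ℕ, ∑ k ∈ Finset.range n, (a k + b k + c k) =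
        ∑ m ∈ Finset.range (3 * n), 1 / ((m:ℝ) + 1) ^ 2 := by
      intro n
      induction n with
      | zero => simp
      | succ n ih =>
        rw [Finset.sum_range_succ, ih, Nat.mul_succ]
        rw [show 3 * n + 3 = (3*n + 1) + 1 + 1 by ring]
        rw [Finset.sum_range_succ, Finset.sum_range_succ, Finset.sum_range_succ]
        push_cast
        ring
    simp only [hpartial]
    exact hS.tendsto_sum_nat.comp (tendsto_atTop_atTop_of_monotone
      (fun i j hij => Nat.mul_le_mul_left 3 hij)
      (fun n => ⟨n, Nat.le_mul_of_pos_left n (by norm_num)⟩))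
  have hsum_eq : π ^ 2 / 6 = (∑' k, a k) + (∑' k, b k) + π ^ 2 / 54 :=
    htriple.unique ((ha.hasSum.add hb.hasSum).add hc)
  have hB : ∑' k, b k = π ^ 2 / 6 - (∑' k, a k) - π ^ 2 / 54 := by linarith
  have htri : trigamma (1/3) = 9 * ∑' k, a k := by
    rw [trigamma, ← tsum_mul_left]
    apply tsum_congr
    intro k
    have h3 : (1/3 + (k:ℝ)) ^ 2 = (3*(k:ℝ)+1) ^ 2 / 9 := by ring
    rw [h3, ha_def]
    have : (3*(k:ℝ)+1) ^ 2 ≠ 0 := by positivity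
    field_simp
  have := (hc.sub hb.hasSum).tsum_eq
  rw [this, hB, htri]
  ring

noncomputable def f (k : ℕ) (x : ℝ) : ℝ := (x ^ (3*k+1) - x ^ (3*k+2)) * Real.log x

lemma cont_pow_log (n : ℕ) (hn : 1 ≤ n) : Continuous fun x : ℝ => x ^ n * Real.log x := by
  have : (fun x : ℝ => x ^ n * Real.log x) = fun x => x ^ (n - 1) * (x * Real.log x) := by
    funext x
    rw [← mul_assoc, ← pow_succ, Nat.sub_add_cancel hn]
  rw [this]
  exact (continuous_pow _).mul Real.continuous_mul_log

lemma f_cont (k : ℕ) : Continuous (f k) := by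
  have : f k = fun x => x ^ (3*k+1) * Real.log x - x ^ (3*k+2) * Real.log x := by
    funext x; simp [f]; ring
  rw [this]
  exact (cont_pow_log _ (by omega)).sub (cont_pow_log _ (by omega))

lemma f_int (k : ℕ) :
    ∫ x in (0:ℝ)..1, f k x = -(1 / (3*(k:ℝ)+2) ^ 2) + 1 / (3*(k:ℝ)+3) ^ 2 := by
  have h1 : f k = fun x => x ^ (3*k+1) * Real.log x - x ^ (3*k+2) * Real.log x := by
    funext x; simp [f]; ring
  rw [h1, intervalIntegral.integral_sub
    ((cont_pow_log _ (by omega)).intervalIntegrable 0 1)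
    ((cont_pow_log _ (by omega)).intervalIntegrable 0 1),
    int_pow_log _ (by omega), int_pow_log _ (by omega)]
  push_cast
  ring

lemma f_nonpos {k : ℕ} {x : ℝ} (hx : x ∈ Ioc (0:ℝ) 1) : f k x ≤ 0 := by
  have h1 : x ^ (3*k+1) - x ^ (3*k+2) ≥ 0 := by
    have := pow_le_pow_of_le_one hx.1.le hx.2 (show 3*k+1 ≤ 3*k+2 by omega)
    linarith
  have h2 : Real.log x ≤ 0 := Real.log_nonpos hx.1.le hx.2
  exact mul_nonpos_of_nonneg_of_nonpos h1 h2

lemma f_hasSum {x : ℝ} (hx : x ∈ Ioc (0:ℝ) 1) :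
    HasSum (fun k => f k x) (x * Real.log x / (x ^ 2 + x + 1)) := by
  rcases eq_or_lt_of_le hx.2 with h1 | h1
  · subst h1
    simp only [f, Real.log_one, mul_zero]
    simpa using hasSum_zero
  · have hx3 : x ^ 3 < 1 := by
      calc x ^ 3 ≤ x := by nlinarith [hx.1, hx.2, mul_pos hx.1 hx.1]
        _ < 1 := h1
    have hgeo : HasSum (fun k : ℕ => (x ^ 3) ^ k) (1 - x ^ 3)⁻¹ :=
      hasSum_geometric_of_lt_one (pow_nonneg hx.1.le 3) hx3
    have h := hgeo.mul_left ((x - x ^ 2) * Real.log x)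
    have heq : (fun k : ℕ => (x - x ^ 2) * Real.log x * (x ^ 3) ^ k) = fun k => f k x := by
      funext k
      simp only [f, ← pow_mul]
      rw [show x ^ (3*k+1) = x ^ (k*3) * x by rw [pow_succ, mul_comm 3 k],
          show x ^ (3*k+2) = x ^ (k*3) * x ^ 2 by rw [show 3*k+2 = k*3+2 by ring, pow_add]]
      ring
    rw [heq] at h
    convert h using 1
    · rfl
    have hne : x ^ 2 + x + 1 ≠ 0 := by nlinarith [hx.1]
    have hne2 : 1 - x ^ 3 ≠ 0 := by nlinarith
    rw [eq_comm, mul_inv_eq_iff_eq_mul₀ hne2]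
    rw [div_mul_eq_mul_div, eq_div_iff hne]
    ring

theorem stmt6 :
    ∫ x in (0:ℝ)..1, x * Real.log x / (x ^ 2 + x + 1) =
      -(7 * Real.pi ^ 2 / 54) + (1 / 9) * trigamma (1/3) := by
  have hle3 : ∀ (k : ℕ) (d : ℝ), 1 ≤ d → d ≤ 3 →
      1 / (3*(k:ℝ)+d) ^ 2 ≤ 1 / ((k:ℝ)+1) ^ 2 := by
    intro k d h1 h3
    apply one_div_le_one_div_of_le (by positivity)
    apply pow_le_pow_left₀ (by positivity)
    have : (0:ℝ) ≤ k := Nat.cast_nonneg k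
    linarith
  have hb : Summable (fun k : ℕ => 1 / (3*(k:ℝ)+2) ^ 2) :=
    Summable.of_nonneg_of_le (fun k => by positivity)
      (fun k => hle3 k 2 (by norm_num) (by norm_num)) hS.summable
  have hc : Summable (fun k : ℕ => 1 / (3*(k:ℝ)+3) ^ 2) :=
    Summable.of_nonneg_of_le (fun k => by positivity)
      (fun k => hle3 k 3 (by norm_num) (by norm_num)) hS.summable
  have hg : Summable (fun k : ℕ => 1 / (3*(k:ℝ)+2) ^ 2 - 1 / (3*(k:ℝ)+3) ^ 2) := hb.sub hc
  have hgnn : ∀ k : ℕ, 0 ≤ 1 / (3*(k:ℝ)+2) ^ 2 - 1 / (3*(k:ℝ)+3) ^ 2 := by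
    intro k
    have h : 1 / (3*(k:ℝ)+3) ^ 2 ≤ 1 / (3*(k:ℝ)+2) ^ 2 := by
      apply one_div_le_one_div_of_le (by positivity)
      apply pow_le_pow_left₀ (by positivity)
      linarith [Nat.cast_nonneg (α := ℝ) k]
    linarith
  have hIoc : ∀ k : ℕ, ∫ x in Ioc (0:ℝ) 1, f k x =
      -(1 / (3*(k:ℝ)+2) ^ 2) + 1 / (3*(k:ℝ)+3) ^ 2 := by
    intro k
    rw [← intervalIntegral.integral_of_le (by norm_num : (0:ℝ) ≤ 1)]
    exact f_int k
  have hlin : ∀ k : ℕ, ∫⁻ x in Ioc (0:ℝ) 1, ‖f k x‖₊ =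
      ENNReal.ofReal (1 / (3*(k:ℝ)+2) ^ 2 - 1 / (3*(k:ℝ)+3) ^ 2) := by
    intro k
    have hae : ∀ᵐ x ∂(volume.restrict (Ioc (0:ℝ) 1)),
        (↑‖f k x‖₊ : ℝ≥0∞) = ENNReal.ofReal (-(f k x)) := by
      filter_upwards [ae_restrict_mem measurableSet_Ioc] with x hx
      rw [← enorm_eq_nnnorm, ← ofReal_norm, Real.norm_eq_abs, abs_of_nonpos (f_nonpos hx)]
    rw [lintegral_congr_ae hae,
      ← ofReal_integral_eq_lintegral_ofReal (f := fun x => -f k x) ((f_cont k).neg.integrableOn_Ioc)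
        (by filter_upwards [ae_restrict_mem measurableSet_Ioc] with x hx
            simpa using f_nonpos hx)]
    congr 1
    rw [integral_neg, hIoc k]
    ring
  rw [intervalIntegral.integral_of_le (by norm_num : (0:ℝ) ≤ 1),
    setIntegral_congr_fun measurableSet_Ioc
      (fun x hx => ((f_hasSum hx).tsum_eq).symm : ∀ x ∈ Ioc (0:ℝ) 1,
        x * Real.log x / (x ^ 2 + x + 1) = ∑' k, f k x),
    MeasureTheory.integral_tsum (fun k => (f_cont k).aestronglyMeasurable.restrict)
      (by
        simp only [enorm_eq_nnnorm]
        rw [funext hlin, ← ENNReal.ofReal_tsum_of_nonneg hgnn hg]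
        exact ENNReal.ofReal_ne_top)]
  rw [← series_val]
  apply tsum_congr
  intro k
  rw [hIoc k]
  ring
end

section
/- ∫₀¹ x·log(x)/(x²-x+1) dx = 5π²/36 - (1/6)ψ'(1/3). -/
open Real MeasureTheory Set

namespace Stmt7aux

noncomputable def g (n : ℕ) : ℝ := 1 / (n : ℝ) ^ 2

lemma summable_g : Summable g :=
  Real.summable_one_div_nat_pow.mpr one_lt_two

lemma summable_comp (a d : ℕ) (hd : 0 < d) : Summable (fun k => g (d * k + a)) := by
  apply summable_g.comp_injective
  intro x y h
  simp only at h
  have : d * x = d * y := by omega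
  exact Nat.eq_of_mul_eq_mul_left hd this

lemma g_scale (c n : ℕ) : g (c * n) = (1 / (c:ℝ)^2) * g n := by
  simp only [g, Nat.cast_mul, mul_pow, one_div, mul_inv]

noncomputable def T (a d : ℕ) : ℝ := ∑' k : ℕ, g (d * k + a)

lemma mod3 (f : ℕ → ℝ) (hf : Summable f)
    (h0 : Summable fun q => f (3 * q)) (h1 : Summable fun q => f (3 * q + 1))
    (h2s : Summable fun q => f (3 * q + 2)) :
    ∑' n, f n = (∑' q, f (3 * q)) + (∑' q, f (3 * q + 1)) + (∑' q, f (3 * q + 2)) := by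
  have hsp : Summable (fun p : ℕ × Fin 3 => f (p.1 * 3 + (p.2 : ℕ))) := by
    have := ((Nat.divModEquiv 3).symm.summable_iff (f := f)).mpr hf
    simpa [Nat.divModEquiv, Function.comp_def] using this
  have he := ((Nat.divModEquiv 3).symm.tsum_eq f)
  rw [← he]
  have h2 : ∑' p : ℕ × Fin 3, f ((Nat.divModEquiv 3).symm p)
      = ∑' p : ℕ × Fin 3, f (p.1 * 3 + (p.2 : ℕ)) :=
    tsum_congr fun p => by simp [Nat.divModEquiv]
  rw [h2, Summable.tsum_prod' hsp (fun b => .of_finite)]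
  have h3 : ∀ b : ℕ, ∑' c : Fin 3, f (b * 3 + (c : ℕ))
      = f (3 * b) + f (3 * b + 1) + f (3 * b + 2) := by
    intro b
    rw [tsum_fintype, Fin.sum_univ_three]
    norm_num [mul_comm]
  rw [tsum_congr h3, Summable.tsum_add (h0.add h1) h2s,
    Summable.tsum_add h0 h1]

end Stmt7aux
namespace Stmt7aux

lemma g_nonneg (n : ℕ) : 0 ≤ g n := by unfold g; positivity

lemma T_scale (a d c : ℕ) : T (c*a) (c*d) = (1/(c:ℝ)^2) * T a d := by
  unfold T
  rw [← tsum_mul_left]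
  exact tsum_congr fun k => by rw [show c*d*k + c*a = c*(d*k+a) by ring, g_scale]

lemma mod2 (f : ℕ → ℝ) (hf : Summable f)
    (h0 : Summable fun q => f (2 * q)) (h1 : Summable fun q => f (2 * q + 1)) :
    ∑' n, f n = (∑' q, f (2 * q)) + (∑' q, f (2 * q + 1)) := by
  have hsp : Summable (fun p : ℕ × Fin 2 => f (p.1 * 2 + (p.2 : ℕ))) := by
    have := ((Nat.divModEquiv 2).symm.summable_iff (f := f)).mpr hf
    simpa [Nat.divModEquiv, Function.comp_def] using this
  have he := ((Nat.divModEquiv 2).symm.tsum_eq f)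
  rw [← he]
  have h2 : ∑' p : ℕ × Fin 2, f ((Nat.divModEquiv 2).symm p)
      = ∑' p : ℕ × Fin 2, f (p.1 * 2 + (p.2 : ℕ)) :=
    tsum_congr fun p => by simp [Nat.divModEquiv]
  rw [h2, Summable.tsum_prod' hsp (fun b => .of_finite)]
  have h3 : ∀ b : ℕ, ∑' c : Fin 2, f (b * 2 + (c : ℕ)) = f (2 * b) + f (2 * b + 1) := by
    intro b
    rw [tsum_fintype, Fin.sum_univ_two]
    norm_num [mul_comm]
  rw [tsum_congr h3, Summable.tsum_add h0 h1]

lemma split2 (a d : ℕ) (hd : 0 < d) : T a d = T a (2*d) + T (a+d) (2*d) := by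
  unfold T
  have he : Summable fun k => g (d * (2*k) + a) := by
    apply (summable_comp a (2*d) (by omega)).congr
    intro k; congr 1; ring
  have ho : Summable fun k => g (d * (2*k+1) + a) := by
    apply (summable_comp (a+d) (2*d) (by omega)).congr
    intro k; congr 1; ring
  rw [mod2 (fun k => g (d * k + a)) (summable_comp a d hd) he ho]
  congr 1
  · exact tsum_congr fun k => by congr 1; ring
  · exact tsum_congr fun k => by congr 1; ring

lemma T11 : T 1 1 = π ^ 2 / 6 := by
  have hz : (∑' n : ℕ, g n) = π ^ 2 / 6 := hasSum_zeta_two.tsum_eq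
  rw [Summable.tsum_eq_zero_add summable_g] at hz
  have h0 : g 0 = 0 := by simp [g]
  rw [h0, zero_add] at hz
  rw [← hz]
  exact tsum_congr fun k => by rw [one_mul, add_comm]

lemma sumg : ∑' n, g n = T 1 1 := by
  rw [Summable.tsum_eq_zero_add summable_g]
  have h0 : g 0 = 0 := by simp [g]
  rw [h0, zero_add]
  exact tsum_congr fun k => by rw [one_mul, add_comm]

lemma eZ : T 1 1 = π ^ 2 / 6 := T11

lemma e2 : T 1 1 = T 1 2 + T 2 2 := by have h := split2 1 1 one_pos; norm_num at h; exact h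
lemma e3 : T 2 2 = 1/4 * T 1 1 := by have h := T_scale 1 1 2; norm_num at h; linarith
lemma e4 : T 3 6 = 1/9 * T 1 2 := by have h := T_scale 1 2 3; norm_num at h; linarith
lemma e5 : T 6 6 = 1/36 * T 1 1 := by have h := T_scale 1 1 6; norm_num at h; linarith
lemma e6 : T 2 6 = 1/4 * T 1 3 := by have h := T_scale 1 3 2; norm_num at h; linarith
lemma e7 : T 2 3 = T 2 6 + T 5 6 := by
  have h := split2 2 3 (by norm_num); norm_num at h; exact h
lemma e8 : T 3 3 = 1/9 * T 1 1 := by have h := T_scale 1 1 3; norm_num at h; linarith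

lemma e9 : T 1 1 = T 3 3 + T 1 3 + T 2 3 := by
  have s0 : Summable fun q => g (3 * q) := by
    apply (summable_comp 0 3 (by norm_num)).congr
    intro k; norm_num
  have h := mod3 g summable_g s0 (summable_comp 1 3 (by norm_num)) (summable_comp 2 3 (by norm_num))
  rw [sumg] at h
  have h30 : ∑' q, g (3 * q) = T 3 3 := by
    rw [Summable.tsum_eq_zero_add s0]
    have h0 : g (3 * 0) = 0 := by simp [g]
    rw [h0, zero_add]
    exact tsum_congr fun k => by congr 1
  rw [h30] at h
  exact h


lemma series_eval :
    ∑' n : ℕ, (-1:ℝ)^n * (-(g (3*n+2)) - g (3*n+3)) = 5 * π^2/36 - 6 * T 2 6 := by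
  set h : ℕ → ℝ := fun n => (-1:ℝ)^n * (-(g (3*n+2)) - g (3*n+3)) with hh
  have hbound : ∀ n, ‖h n‖ ≤ g (3*n+2) + g (3*n+3) := by
    intro n
    simp only [hh]
    rw [norm_mul, norm_pow, norm_neg, norm_one, one_pow, one_mul,
      show -(g (3*n+2)) - g (3*n+3) = -((g (3*n+2)) + g (3*n+3)) by ring, norm_neg,
      Real.norm_of_nonneg (add_nonneg (g_nonneg _) (g_nonneg _))]
  have hs : Summable h :=
    Summable.of_norm_bounded
      ((summable_comp 2 3 (by norm_num)).add (summable_comp 3 3 (by norm_num))) hbound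
  have hev : ∀ k, h (2*k) = -(g (6*k+2) + g (6*k+3)) := by
    intro k
    simp only [hh]
    rw [pow_mul, show 3*(2*k)+2 = 6*k+2 by ring, show 3*(2*k)+3 = 6*k+3 by ring]
    norm_num
    ring
  have hod : ∀ k, h (2*k+1) = g (6*k+5) + g (6*k+6) := by
    intro k
    simp only [hh]
    rw [pow_succ, pow_mul, show 3*(2*k+1)+2 = 6*k+5 by ring, show 3*(2*k+1)+3 = 6*k+6 by ring]
    norm_num
    ring
  have se : Summable fun k => h (2*k) := by
    apply Summable.congr
      (((summable_comp 2 6 (by norm_num)).add (summable_comp 3 6 (by norm_num))).neg)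
    intro k; rw [hev k]
  have so : Summable fun k => h (2*k+1) := by
    apply Summable.congr
      ((summable_comp 5 6 (by norm_num)).add (summable_comp 6 6 (by norm_num)))
    intro k; rw [hod k]
  rw [mod2 h hs se so]
  have t1 : ∑' k, h (2*k) = -(T 2 6 + T 3 6) := by
    rw [tsum_congr hev, tsum_neg,
      Summable.tsum_add (summable_comp 2 6 (by norm_num)) (summable_comp 3 6 (by norm_num))]
    rfl
  have t2 : ∑' k, h (2*k+1) = T 5 6 + T 6 6 := by
    rw [tsum_congr hod,
      Summable.tsum_add (summable_comp 5 6 (by norm_num)) (summable_comp 6 6 (by norm_num))]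
    rfl
  rw [t1, t2]
  linarith [eZ, e2, e3, e4, e5, e6, e7, e8, e9]

end Stmt7aux

namespace Stmt7aux

lemma cont_pow_mul_log (k : ℕ) : Continuous fun x : ℝ => x^(k+1) * Real.log x := by
  have h : Continuous fun x : ℝ => x^k * (x * Real.log x) :=
    (continuous_pow k).mul Real.continuous_mul_log
  have h2 : (fun x : ℝ => x^(k+1) * Real.log x) = fun x : ℝ => x^k * (x * Real.log x) := by
    funext x; ring
  rw [h2]; exact h

lemma integral_pml (m : ℕ) :
    ∫ x in (0:ℝ)..1, x^(m+1) * Real.log x = -(1/((m:ℝ)+2)^2) := by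
  have hc : ((m:ℝ)+2) ≠ 0 := by positivity
  set F : ℝ → ℝ := fun x => x^(m+2) * Real.log x / ((m:ℝ)+2) - x^(m+2) / ((m:ℝ)+2)^2 with hF
  have hG : Continuous fun y : ℝ =>
      y^(m+1) * Real.log y / ((m:ℝ)+2) - y^(m+1)/((m:ℝ)+2)^2 :=
    ((cont_pow_mul_log m).div_const _).sub ((continuous_pow (m+1)).div_const _)
  have hder : ∀ x ∈ Set.uIcc (0:ℝ) 1, HasDerivAt F (x^(m+1) * Real.log x) x := by
    intro x _
    rcases eq_or_ne x 0 with rfl | hx0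
    · rw [hasDerivAt_iff_tendsto_slope]
      have hval : (0:ℝ)^(m+1) * Real.log 0 = 0 := by simp
      rw [hval]
      have h0 : ((0:ℝ)^(m+1) * Real.log 0 / ((m:ℝ)+2) - (0:ℝ)^(m+1)/((m:ℝ)+2)^2) = 0 := by
        simp
      have htend := hG.tendsto 0
      rw [h0] at htend
      apply Filter.Tendsto.congr' _ (htend.mono_left nhdsWithin_le_nhds)
      filter_upwards [self_mem_nhdsWithin] with y hy
      have hy0 : y ≠ 0 := hy
      rw [slope_def_field]
      simp only [hF]
      field_simp
      ring
    · have h1 : HasDerivAt (fun y : ℝ => y^(m+2)) (((m:ℝ)+2) * x^(m+1)) x := by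
        have h := hasDerivAt_pow (m+2) x
        have he : m + 2 - 1 = m + 1 := by omega
        rw [he] at h
        refine h.congr_deriv ?_
        push_cast
        ring
      have h2 : HasDerivAt Real.log x⁻¹ x := Real.hasDerivAt_log hx0
      have hD := ((h1.mul h2).div_const ((m:ℝ)+2)).sub (h1.div_const (((m:ℝ)+2)^2))
      refine hD.congr_deriv ?_
      have hxp : x^(m+2) = x^(m+1) * x := by ring
      field_simp
      ring
  have hInt : IntervalIntegrable (fun x : ℝ => x^(m+1) * Real.log x) volume 0 1 :=
    (cont_pow_mul_log m).intervalIntegrable _ _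
  rw [intervalIntegral.integral_eq_sub_of_hasDerivAt hder hInt]
  simp only [hF]
  simp [Real.log_one]

end Stmt7aux

namespace Stmt7aux

lemma tri : trigamma (1/3) = 36 * T 2 6 := by
  unfold trigamma T
  rw [← tsum_mul_left]
  apply tsum_congr
  intro k
  have hk : ((6*k+2:ℕ):ℝ) = 6*((1:ℝ)/3 + k) := by push_cast; ring
  rw [g, hk]
  have h : ((1:ℝ)/3 + k) ≠ 0 := by positivity
  rw [mul_pow]
  rw [mul_one_div]
  rw [div_eq_div_iff (by positivity) (by positivity)]
  ring

end Stmt7aux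

open Stmt7aux in
theorem stmt7 :
    ∫ x in (0:ℝ)..1, x * Real.log x / (x ^ 2 - x + 1) =
      5 * Real.pi ^ 2 / 36 - (1 / 6) * trigamma (1/3) := by
  set F : ℕ → ℝ → ℝ := fun n x => (-1:ℝ)^n * ((x^(3*n+1) + x^(3*n+2)) * Real.log x) with hFdef
  have hsplit : ∀ n : ℕ, (fun x : ℝ => (x^(3*n+1) + x^(3*n+2)) * Real.log x)
      = fun x : ℝ => x^(3*n+1) * Real.log x + x^(3*n+1+1) * Real.log x := by
    intro n; funext x; ring
  have hFcont : ∀ n, Continuous (F n) := by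
    intro n
    apply continuous_const.mul
    rw [hsplit n]
    exact (cont_pow_mul_log (3*n)).add (cont_pow_mul_log (3*n+1))
  have hInt : ∀ n, MeasureTheory.IntegrableOn (F n) (Set.Ioc 0 1) volume := fun n =>
    (hFcont n).integrableOn_Ioc
  have key : ∀ n, ∫ x in Set.Ioc (0:ℝ) 1, F n x
      = (-1:ℝ)^n * (-(g (3*n+2)) - g (3*n+3)) := by
    intro n
    rw [← intervalIntegral.integral_of_le zero_le_one]
    simp only [hFdef]
    rw [intervalIntegral.integral_const_mul]
    congr 1
    have hic : ∀ x ∈ Set.uIcc (0:ℝ) 1, (x^(3*n+1) + x^(3*n+2)) * Real.log x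
        = x^(3*n+1) * Real.log x + x^(3*n+1+1) * Real.log x := fun x _ => by ring
    rw [intervalIntegral.integral_congr hic,
      intervalIntegral.integral_add ((cont_pow_mul_log (3*n)).intervalIntegrable _ _)
        ((cont_pow_mul_log (3*n+1)).intervalIntegrable _ _),
      integral_pml (3*n), integral_pml (3*n+1)]
    unfold g; push_cast; ring
  have hnormint : ∀ n, ∫ x in Set.Ioc (0:ℝ) 1, ‖F n x‖ = g (3*n+2) + g (3*n+3) := by
    intro n
    have heq : Set.EqOn (fun x => ‖F n x‖)
        (fun x => -((x^(3*n+1) + x^(3*n+2)) * Real.log x)) (Set.Ioc (0:ℝ) 1) := by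
      intro x hx
      simp only [hFdef]
      have hxpow : (0:ℝ) ≤ x^(3*n+1) + x^(3*n+2) :=
        add_nonneg (pow_nonneg hx.1.le _) (pow_nonneg hx.1.le _)
      have hlog : Real.log x ≤ 0 := Real.log_nonpos hx.1.le hx.2
      rw [norm_mul, norm_pow, norm_neg, norm_one, one_pow, one_mul, norm_mul,
        Real.norm_of_nonneg hxpow, Real.norm_of_nonpos hlog]
      ring
    rw [MeasureTheory.setIntegral_congr_fun measurableSet_Ioc heq,
      ← intervalIntegral.integral_of_le zero_le_one, intervalIntegral.integral_neg]
    have hic : ∀ x ∈ Set.uIcc (0:ℝ) 1, (x^(3*n+1) + x^(3*n+2)) * Real.log x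
        = x^(3*n+1) * Real.log x + x^(3*n+1+1) * Real.log x := fun x _ => by ring
    rw [intervalIntegral.integral_congr hic,
      intervalIntegral.integral_add ((cont_pow_mul_log (3*n)).intervalIntegrable _ _)
        ((cont_pow_mul_log (3*n+1)).intervalIntegrable _ _),
      integral_pml (3*n), integral_pml (3*n+1)]
    unfold g; push_cast; ring
  have hsumnorm : Summable fun n => ∫ x in Set.Ioc (0:ℝ) 1, ‖F n x‖ := by
    apply Summable.congr
      ((summable_comp 2 3 (by norm_num)).add (summable_comp 3 3 (by norm_num)))
    intro n; rw [hnormint n]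
  have interch := MeasureTheory.integral_tsum_of_summable_integral_norm hInt hsumnorm
  have hpt : Set.EqOn (fun x => x * Real.log x / (x ^ 2 - x + 1))
      (fun x => ∑' n, F n x) (Set.Ioc (0:ℝ) 1) := by
    intro x hx
    rcases hx.2.eq_or_lt with heq | hx1
    · subst heq
      simp [hFdef, Real.log_one]
    · have hq : (0:ℝ) < x^2 - x + 1 := by nlinarith [sq_nonneg (2*x-1)]
      have habs : |(-(x^3))| < 1 := by
        rw [abs_neg, abs_of_nonneg (pow_nonneg hx.1.le 3)]
        exact pow_lt_one₀ hx.1.le hx1 (by norm_num)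
      have hgeo := (hasSum_geometric_of_abs_lt_one habs).mul_left ((x + x^2) * Real.log x)
      have h3 : ∀ n : ℕ, (x + x^2) * Real.log x * (-(x^3))^n = F n x := by
        intro n
        simp only [hFdef]
        rw [neg_pow, ← pow_mul]
        ring
      have h4 : (∑' n, F n x) = (x + x^2) * Real.log x * (1 - -(x^3))⁻¹ := by
        rw [tsum_congr fun n => (h3 n).symm]
        exact hgeo.tsum_eq
      show x * Real.log x / (x ^ 2 - x + 1) = ∑' n, F n x
      rw [h4]
      have hone : (1:ℝ) - -(x^3) = (1+x)*(x^2-x+1) := by ring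
      rw [hone, mul_inv]
      have h1x : (1:ℝ)+x ≠ 0 := by nlinarith [hx.1]
      field_simp
  rw [intervalIntegral.integral_of_le zero_le_one,
    MeasureTheory.setIntegral_congr_fun measurableSet_Ioc hpt, ← interch,
    tsum_congr key, series_eval, tri]
  ring
end

section
/- For 0 < t < π, ∫₀¹ log(x)/(x²-2cos(t)x+1) dx = -(1/sin t)·∑_{k=1}^∞ sin(kt)/k². -/
open MeasureTheory Set

/-- Interval integrability of `x ^ k * log x` on `[0, 1]`. -/
lemma aux_intervalIntegrable (k : ℕ) :
    IntervalIntegrable (fun x : ℝ => x ^ k * Real.log x) volume 0 1 := by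
  have hg : IntervalIntegrable (fun x : ℝ => 2 * x ^ (-(1/2) : ℝ)) volume 0 1 :=
    (intervalIntegral.intervalIntegrable_rpow' (by norm_num)).const_mul 2
  refine hg.mono_fun ?_ ?_
  · exact ((measurable_id.pow_const k).mul Real.measurable_log).aestronglyMeasurable
  · have h : Set.uIoc (0:ℝ) 1 = Set.Ioc 0 1 := Set.uIoc_of_le (by norm_num)
    rw [Filter.EventuallyLE, ae_restrict_iff' (by rw [h]; exact measurableSet_Ioc)]
    refine Filter.Eventually.of_forall fun x hx => ?_
    rw [h] at hx
    obtain ⟨hx0, hx1⟩ := hx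
    have hrp : (0:ℝ) < x ^ (-(1/2) : ℝ) := Real.rpow_pos_of_pos hx0 _
    have hlog : -Real.log x ≤ 2 * x ^ (-(1/2) : ℝ) := by
      have h1 : Real.log (x ^ (-(1/2) : ℝ)) = -(1/2) * Real.log x := Real.log_rpow hx0 _
      have h2 : Real.log (x ^ (-(1/2) : ℝ)) ≤ x ^ (-(1/2) : ℝ) - 1 :=
        Real.log_le_sub_one_of_pos hrp
      nlinarith
    have hlog0 : Real.log x ≤ 0 := Real.log_nonpos hx0.le hx1
    have hxk : x ^ k ≤ 1 := pow_le_one₀ hx0.le hx1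
    have hxk0 : (0:ℝ) ≤ x ^ k := pow_nonneg hx0.le k
    simp only [Real.norm_eq_abs, abs_mul, abs_of_nonneg hxk0]
    have : |Real.log x| = -Real.log x := abs_of_nonpos hlog0
    rw [this, abs_of_nonneg hrp.le, show |(2:ℝ)| = 2 by norm_num]
    nlinarith

/-- The basic integral `∫₀¹ xᵏ log x dx = -1/(k+1)²`. -/
lemma aux_integral (k : ℕ) :
    ∫ x in Ioo (0:ℝ) 1, x ^ k * Real.log x = -(1 / ((k : ℝ) + 1) ^ 2) := by
  have hk1 : ((k : ℝ) + 1) ≠ 0 := by positivity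
  set F : ℝ → ℝ := fun x => x ^ (k+1) * Real.log x / ((k:ℝ)+1) - x ^ (k+1) / ((k:ℝ)+1)^2
    with hF
  have hderiv : ∀ x ∈ Ioo (0:ℝ) 1, HasDerivAt F (x ^ k * Real.log x) x := by
    intro x hx
    have hx0 : x ≠ 0 := ne_of_gt hx.1
    have h1 : HasDerivAt (fun x : ℝ => x ^ (k+1)) ((↑(k+1) : ℝ) * x ^ k) x := by
      simpa using hasDerivAt_pow (k+1) x
    have h2 : HasDerivAt Real.log x⁻¹ x := Real.hasDerivAt_log hx0
    have h3 := ((h1.mul h2).div_const ((k:ℝ)+1)).sub (h1.div_const (((k:ℝ)+1)^2))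
    convert h3 using 1
    · rfl
    · rfl
    · rfl
    have hxx : x ^ (k+1) * x⁻¹ = x ^ k := by
      rw [pow_succ]
      field_simp
    rw [hxx]
    push_cast
    field_simp
    ring
  have hint := aux_intervalIntegrable k
  have ha : Filter.Tendsto F (nhdsWithin 0 (Ioi 0)) (nhds 0) := by
    have h1 : Filter.Tendsto (fun x : ℝ => Real.log x * x ^ (((k:ℝ)+1) : ℝ))
        (nhdsWithin 0 (Ioi 0)) (nhds 0) := tendsto_log_mul_rpow_nhdsGT_zero (by positivity)
    have h1' : Filter.Tendsto (fun x : ℝ => x ^ (k+1) * Real.log x)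
        (nhdsWithin 0 (Ioi 0)) (nhds 0) := by
      refine h1.congr' ?_
      filter_upwards [self_mem_nhdsWithin] with x hx
      have : x ^ (((k:ℝ)+1) : ℝ) = x ^ (k+1) := by
        rw [show ((k:ℝ)+1) = ((k+1 : ℕ) : ℝ) by push_cast; ring, Real.rpow_natCast]
      rw [this]; ring
    have h2 : Filter.Tendsto (fun x : ℝ => x ^ (k+1) / ((k:ℝ)+1)^2)
        (nhdsWithin 0 (Ioi 0)) (nhds 0) := by
      have := ((continuous_pow (k+1)).tendsto (0:ℝ)).div_const (((k:ℝ)+1)^2)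
      simp only [zero_pow (Nat.succ_ne_zero k), zero_div] at this
      exact this.mono_left nhdsWithin_le_nhds
    have := (h1'.div_const ((k:ℝ)+1)).sub h2
    simpa using this
  have hb : Filter.Tendsto F (nhdsWithin 1 (Iio 1)) (nhds (-(1 / ((k : ℝ) + 1) ^ 2))) := by
    have hc : ContinuousAt F 1 := by
      have := (((continuous_pow (k+1)).continuousAt (x := (1:ℝ))).mul
        (Real.continuousAt_log one_ne_zero)).div_const ((k:ℝ)+1) |>.sub
        (((continuous_pow (k+1)).continuousAt (x := (1:ℝ))).div_const (((k:ℝ)+1)^2))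
      exact this
    have hval : F 1 = -(1 / ((k : ℝ) + 1) ^ 2) := by
      simp [hF, Real.log_one]
    rw [← hval]
    exact (hc.continuousWithinAt).tendsto
  have key := intervalIntegral.integral_eq_sub_of_hasDerivAt_of_tendsto
    (by norm_num : (0:ℝ) < 1) hderiv hint ha hb
  rw [← MeasureTheory.integral_Ioc_eq_integral_Ioo,
    ← intervalIntegral.integral_of_le (by norm_num : (0:ℝ) ≤ 1), key]
  ring

/-- The sine series summing to the Poisson-kernel-like denominator. -/
lemma aux_hasSum (t : ℝ) (x : ℝ) (hx0 : 0 ≤ x) (hx1 : x < 1) :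
    HasSum (fun k : ℕ => Real.sin (((k:ℝ)+1)*t) * x ^ k)
      (Real.sin t / (x ^ 2 - 2 * Real.cos t * x + 1)) := by
  set z : ℂ := (x : ℂ) * Complex.exp (t * Complex.I) with hz
  have hzn : ‖z‖ < 1 := by
    rw [hz, norm_mul, Complex.norm_real, Real.norm_eq_abs,
      Complex.norm_exp_ofReal_mul_I, mul_one, abs_of_nonneg hx0]
    exact hx1
  have hgeo := (hasSum_geometric_of_norm_lt_one hzn).mul_left (Complex.exp (t * Complex.I))
  have him := hgeo.mapL Complex.imCLM
  have hterm : ∀ k : ℕ, Complex.imCLM (Complex.exp (t * Complex.I) * z ^ k)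
      = Real.sin (((k:ℝ)+1)*t) * x ^ k := by
    intro k
    have harg : t * Complex.I + (k:ℂ) * (t * Complex.I)
        = ((((k:ℝ)+1)*t : ℝ) : ℂ) * Complex.I := by push_cast; ring
    have : Complex.exp (t * Complex.I) * z ^ k
        = ((x ^ k : ℝ) : ℂ) * Complex.exp ((((k:ℝ)+1)*t : ℝ) * Complex.I) := by
      rw [hz, mul_pow, ← Complex.exp_nat_mul, mul_left_comm, ← Complex.exp_add, harg]
      norm_cast
    rw [this]
    simp only [Complex.imCLM_apply, Complex.im_ofReal_mul, Complex.exp_ofReal_mul_I_im]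
    ring
  have hden : x ^ 2 - 2 * Real.cos t * x + 1 = Complex.normSq (1 - z) := by
    have h1 : (1 - z).re = 1 - x * Real.cos t := by
      simp [hz, Complex.sub_re, Complex.re_ofReal_mul, Complex.exp_ofReal_mul_I_re]
    have h2 : (1 - z).im = -(x * Real.sin t) := by
      simp [hz, Complex.sub_im, Complex.im_ofReal_mul, Complex.exp_ofReal_mul_I_im]
    rw [Complex.normSq_apply, h1, h2]
    nlinarith [Real.sin_sq_add_cos_sq t]
  have hdpos : 0 < x ^ 2 - 2 * Real.cos t * x + 1 := by
    nlinarith [mul_nonneg hx0 (sub_nonneg.2 (Real.cos_le_one t)), sq_nonneg (1 - x),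
      mul_pos (sub_pos.2 hx1) (sub_pos.2 hx1)]
  have hval : Complex.imCLM (Complex.exp (t * Complex.I) * (1 - z)⁻¹)
      = Real.sin t / (x ^ 2 - 2 * Real.cos t * x + 1) := by
    rw [← div_eq_mul_inv]
    simp only [Complex.imCLM_apply, Complex.div_im]
    have h1 : (1 - z).re = 1 - x * Real.cos t := by
      simp [hz, Complex.sub_re, Complex.re_ofReal_mul, Complex.exp_ofReal_mul_I_re]
    have h2 : (1 - z).im = -(x * Real.sin t) := by
      simp [hz, Complex.sub_im, Complex.im_ofReal_mul, Complex.exp_ofReal_mul_I_im]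
    rw [h1, h2, Complex.exp_ofReal_mul_I_re, Complex.exp_ofReal_mul_I_im, ← hden]
    field_simp
    ring
  rw [← hval]
  exact him.congr_fun fun k => (hterm k).symm

theorem stmt10 (t : ℝ) (ht : 0 < t) (ht' : t < Real.pi) :
    ∫ x in (0:ℝ)..1, Real.log x / (x ^ 2 - 2 * Real.cos t * x + 1) =
      -(1 / Real.sin t) * ∑' k : ℕ, Real.sin ((k + 1) * t) / ((k : ℝ) + 1) ^ 2 := by
  have hs : 0 < Real.sin t := Real.sin_pos_of_pos_of_lt_pi ht ht'
  have hs' : Real.sin t ≠ 0 := ne_of_gt hs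
  set F : ℕ → ℝ → ℝ := fun k x => (Real.sin (((k:ℝ)+1)*t) / Real.sin t) * (x ^ k * Real.log x)
    with hF
  -- pointwise identity on Ioo 0 1
  have hpt : ∀ x ∈ Ioo (0:ℝ) 1,
      Real.log x / (x ^ 2 - 2 * Real.cos t * x + 1) = ∑' k, F k x := by
    intro x hx
    have hDpos : 0 < x ^ 2 - 2 * Real.cos t * x + 1 := by
      nlinarith [mul_nonneg hx.1.le (sub_nonneg.2 (Real.cos_le_one t)),
        mul_pos (sub_pos.2 hx.2) (sub_pos.2 hx.2)]
    have h := (aux_hasSum t x hx.1.le hx.2).mul_right (Real.log x / Real.sin t)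
    have h2 : HasSum (fun k => F k x)
        (Real.sin t / (x ^ 2 - 2 * Real.cos t * x + 1) * (Real.log x / Real.sin t)) := by
      refine h.congr_fun fun k => ?_
      rw [hF]
      ring
    have h3 : Real.sin t / (x ^ 2 - 2 * Real.cos t * x + 1) * (Real.log x / Real.sin t)
        = Real.log x / (x ^ 2 - 2 * Real.cos t * x + 1) := by
      field_simp
    rw [h3] at h2
    exact h2.tsum_eq.symm
  -- integrability of each term
  have hFint : ∀ k, IntegrableOn (F k) (Ioo (0:ℝ) 1) volume := by
    intro k
    have h1 := ((aux_intervalIntegrable k).def').integrable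
    rw [Set.uIoc_of_le (by norm_num : (0:ℝ) ≤ 1)] at h1
    have h2 : IntegrableOn (fun x : ℝ => x ^ k * Real.log x) (Ioc 0 1) volume := h1
    exact (h2.mono_set Ioo_subset_Ioc_self).const_mul _
  -- norm integral computation
  have hnorm : ∀ k, ∫ x in Ioo (0:ℝ) 1, ‖F k x‖
      = (|Real.sin (((k:ℝ)+1)*t)| / Real.sin t) * (1 / ((k : ℝ) + 1) ^ 2) := by
    intro k
    have hcong : ∀ x ∈ Ioo (0:ℝ) 1,
        ‖F k x‖ = (|Real.sin (((k:ℝ)+1)*t)| / Real.sin t) * (-(x ^ k * Real.log x)) := by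
      intro x hx
      have hlog0 : Real.log x ≤ 0 := Real.log_nonpos hx.1.le hx.2.le
      have hxk0 : (0:ℝ) ≤ x ^ k := pow_nonneg hx.1.le k
      rw [hF]
      simp only [Real.norm_eq_abs, abs_mul, abs_div, abs_of_pos hs, abs_of_nonneg hxk0,
        abs_of_nonpos hlog0]
      ring
    rw [MeasureTheory.setIntegral_congr_fun measurableSet_Ioo hcong,
      MeasureTheory.integral_const_mul, MeasureTheory.integral_neg, aux_integral k]
    ring
  have hsum : Summable fun k => ∫ x in Ioo (0:ℝ) 1, ‖F k x‖ := by
    have hb : Summable fun k : ℕ => (1 / Real.sin t) * (1 / ((k : ℝ) + 1) ^ 2) := by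
      apply Summable.mul_left
      have : Summable fun n : ℕ => (1 : ℝ) / (n : ℝ) ^ 2 := by
        simpa using Real.summable_one_div_nat_pow.mpr (by norm_num : 1 < 2)
      have h := (summable_nat_add_iff 1).mpr this
      simpa using h
    refine Summable.of_nonneg_of_le (fun k => ?_) (fun k => ?_) hb
    · rw [hnorm k]; positivity
    · rw [hnorm k]
      have h1 : |Real.sin (((k:ℝ)+1)*t)| ≤ 1 :=
        abs_le.2 ⟨Real.neg_one_le_sin _, Real.sin_le_one _⟩
      gcongr
  -- swap sum and integral
  have hswap : ∫ x in Ioo (0:ℝ) 1, ∑' k, F k x = ∑' k, ∫ x in Ioo (0:ℝ) 1, F k x :=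
    (MeasureTheory.integral_tsum_of_summable_integral_norm hFint hsum).symm
  have hIk : ∀ k, ∫ x in Ioo (0:ℝ) 1, F k x
      = -(1 / Real.sin t) * (Real.sin (((k:ℝ)+1)*t) / ((k : ℝ) + 1) ^ 2) := by
    intro k
    rw [hF]
    simp only []
    rw [MeasureTheory.integral_const_mul, aux_integral k]
    ring
  calc ∫ x in (0:ℝ)..1, Real.log x / (x ^ 2 - 2 * Real.cos t * x + 1)
      = ∫ x in Ioo (0:ℝ) 1, Real.log x / (x ^ 2 - 2 * Real.cos t * x + 1) := by
        rw [intervalIntegral.integral_of_le (by norm_num : (0:ℝ) ≤ 1),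
          MeasureTheory.integral_Ioc_eq_integral_Ioo]
    _ = ∫ x in Ioo (0:ℝ) 1, ∑' k, F k x :=
        MeasureTheory.setIntegral_congr_fun measurableSet_Ioo hpt
    _ = ∑' k, ∫ x in Ioo (0:ℝ) 1, F k x := hswap
    _ = ∑' k : ℕ, -(1 / Real.sin t) * (Real.sin (((k:ℝ)+1)*t) / ((k : ℝ) + 1) ^ 2) := by
        exact tsum_congr hIk
    _ = -(1 / Real.sin t) * ∑' k : ℕ, Real.sin ((k + 1) * t) / ((k : ℝ) + 1) ^ 2 := by
        rw [tsum_mul_left]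
end

section
/- For -1 < a < 1, ∫₀¹ log²(x)/(x²-2ax+1) dx = 2·∑_{k=0}^∞ U_k(a)/(k+1)³. -/
open Real MeasureTheory Filter Set intervalIntegral Topology Polynomial.Chebyshev

noncomputable def myF (k : ℕ) (x : ℝ) : ℝ :=
  x ^ (k+1) * (Real.log x)^2 / ((k:ℝ)+1) - 2 * (x^(k+1) * Real.log x) / ((k:ℝ)+1)^2
    + 2 * x^(k+1) / ((k:ℝ)+1)^3

lemma myF_deriv (k : ℕ) {x : ℝ} (hx : 0 < x) :
    HasDerivAt (myF k) (x ^ k * (Real.log x)^2) x := by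
  have hm : ((k:ℝ)+1) ≠ 0 := by positivity
  have hp : HasDerivAt (fun x : ℝ => x ^ (k+1)) (((k:ℝ)+1) * x ^ k) x := by
    simpa using hasDerivAt_pow (k+1) x
  have hlog : HasDerivAt Real.log x⁻¹ x := Real.hasDerivAt_log hx.ne'
  have hlogsq : HasDerivAt (fun x : ℝ => (Real.log x)^2) (2 * Real.log x * x⁻¹) x := by
    simpa using hlog.fun_pow 2
  have h1 : HasDerivAt (fun x : ℝ => x ^ (k+1) * (Real.log x)^2)
      ((((k:ℝ)+1) * x ^ k) * (Real.log x)^2 + x^(k+1) * (2 * Real.log x * x⁻¹)) x :=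
    hp.mul hlogsq
  have h2 : HasDerivAt (fun x : ℝ => x ^ (k+1) * Real.log x)
      ((((k:ℝ)+1) * x ^ k) * Real.log x + x^(k+1) * x⁻¹) x := hp.mul hlog
  have := (((h1.div_const ((k:ℝ)+1)).sub (((h2.const_mul 2)).div_const (((k:ℝ)+1)^2))).add
    ((hp.const_mul 2).div_const (((k:ℝ)+1)^3)))
  refine this.congr_deriv ?_
  have hxk : x ^ (k+1) = x ^ k * x := pow_succ x k
  field_simp
  ring

lemma myF_tendsto_zero (k : ℕ) : Tendsto (myF k) (𝓝[>] (0:ℝ)) (𝓝 0) := by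
  have hA : Tendsto (fun x : ℝ => x ^ (k+1) * (Real.log x)^2) (𝓝[>] (0:ℝ)) (𝓝 0) := by
    have h := tendsto_log_mul_rpow_nhdsGT_zero (r := ((k:ℝ)+1)/2) (by positivity)
    have h2 : Tendsto (fun x : ℝ => (Real.log x * x ^ (((k:ℝ)+1)/2)) *
        (Real.log x * x ^ (((k:ℝ)+1)/2))) (𝓝[>] (0:ℝ)) (𝓝 0) := by
      simpa using h.mul h
    refine h2.congr' ?_
    filter_upwards [self_mem_nhdsWithin] with x (hx : 0 < x)
    rw [show (Real.log x * x ^ (((k:ℝ)+1)/2)) * (Real.log x * x ^ (((k:ℝ)+1)/2))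
        = (Real.log x)^2 * (x ^ (((k:ℝ)+1)/2) * x ^ (((k:ℝ)+1)/2)) by ring,
      ← Real.rpow_add hx]
    norm_num
    rw [show ((k:ℝ)+1) = ((k+1 : ℕ) : ℝ) by push_cast; ring, Real.rpow_natCast]
    ring
  have hB : Tendsto (fun x : ℝ => x ^ (k+1) * Real.log x) (𝓝[>] (0:ℝ)) (𝓝 0) := by
    have h := tendsto_log_mul_rpow_nhdsGT_zero (r := ((k:ℝ)+1)) (by positivity)
    refine h.congr' ?_
    filter_upwards [self_mem_nhdsWithin] with x (hx : 0 < x)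
    rw [show ((k:ℝ)+1) = ((k+1 : ℕ) : ℝ) by push_cast; ring, Real.rpow_natCast]
    ring
  have hC : Tendsto (fun x : ℝ => x ^ (k+1)) (𝓝[>] (0:ℝ)) (𝓝 0) := by
    have := (continuous_pow (k+1)).tendsto (0:ℝ)
    simpa using this.mono_left nhdsWithin_le_nhds
  have := ((hA.div_const ((k:ℝ)+1)).sub ((hB.const_mul 2).div_const (((k:ℝ)+1)^2))).add
      ((hC.const_mul 2).div_const (((k:ℝ)+1)^3))
  have h' : Tendsto (myF k) (𝓝[>] (0:ℝ))
      (𝓝 (0/((k:ℝ)+1) - 2*0/((k:ℝ)+1)^2 + 2*0/((k:ℝ)+1)^3)) := this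
  simpa using h'

lemma myF_contOn (k : ℕ) (hd : ∀ x : ℝ, 0 < x → HasDerivAt (myF k) (x ^ k * (Real.log x)^2) x) :
    ContinuousOn (myF k) (Icc (0:ℝ) 1) := by
  intro x hx
  rcases eq_or_lt_of_le hx.1 with h0 | h0
  · subst h0
    have hsub : Icc (0:ℝ) 1 ⊆ insert 0 (Ioi 0) := by
      rw [Set.Ioi_insert]; exact fun y hy => hy.1
    have hF0 : myF k 0 = 0 := by simp [myF]
    have key : Tendsto (myF k) (𝓝[Icc (0:ℝ) 1] 0) (𝓝 0) := by
      refine Tendsto.mono_left ?_ (nhdsWithin_mono _ hsub)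
      rw [nhdsWithin_insert, tendsto_sup]
      exact ⟨by simpa [hF0] using tendsto_pure_nhds (myF k) 0, myF_tendsto_zero k⟩
    show Tendsto _ _ (𝓝 (myF k 0))
    rw [hF0]; exact key
  · exact ((hd x h0).continuousAt).continuousWithinAt

lemma myIntble (k : ℕ) : IntervalIntegrable (fun x : ℝ => x ^ k * (Real.log x)^2) volume 0 1 := by
  apply intervalIntegrable_deriv_of_nonneg (g := myF k)
  · rw [Set.uIcc_of_le (zero_le_one)]
    exact myF_contOn k (fun x hx => myF_deriv k hx)
  · intro x hx
    rw [min_eq_left zero_le_one, max_eq_right zero_le_one] at hx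
    exact myF_deriv k hx.1
  · intro x hx
    rw [min_eq_left zero_le_one, max_eq_right zero_le_one] at hx
    exact mul_nonneg (pow_nonneg hx.1.le k) (sq_nonneg _)

lemma myIntegral (k : ℕ) :
    ∫ x in (0:ℝ)..1, x ^ k * (Real.log x)^2 = 2 / ((k:ℝ)+1)^3 := by
  rw [intervalIntegral.integral_eq_sub_of_hasDerivAt_of_tendsto (fa := 0) (fb := 2/((k:ℝ)+1)^3)
    zero_lt_one (fun x hx => myF_deriv k hx.1) (myIntble k) (myF_tendsto_zero k) ?_]
  · ring
  · have : Tendsto (myF k) (𝓝 1) (𝓝 (myF k 1)) := ((myF_deriv k one_pos).continuousAt).tendsto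
    have h1 : myF k 1 = 2/((k:ℝ)+1)^3 := by simp [myF]
    rw [← h1]
    exact this.mono_left nhdsWithin_le_nhds

lemma myBound (a : ℝ) (ha : -1 < a) (ha' : a < 1) :
    ∃ C : ℝ, 0 < C ∧ ∀ k : ℕ, |(U ℝ k).eval a| ≤ C := by
  set s : ℝ := Real.sqrt (1 - a^2) with hs
  have hs0 : 0 < s := Real.sqrt_pos.2 (by nlinarith)
  refine ⟨1/s, by positivity, fun k => ?_⟩
  have h1 : (U ℝ ((k:ℤ))).eval (Real.cos (Real.arccos a)) * Real.sin (Real.arccos a)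
      = Real.sin (((k:ℤ)+1) * Real.arccos a) := U_real_cos (Real.arccos a) (k:ℤ)
  rw [Real.cos_arccos ha.le ha'.le, Real.sin_arccos] at h1
  have : |(U ℝ (k:ℤ)).eval a| * s = |Real.sin (((k:ℤ)+1) * Real.arccos a)| := by
    rw [← h1, abs_mul, abs_of_pos hs0]
  have h2 : |(U ℝ (k:ℤ)).eval a| * s ≤ 1 := by rw [this]; exact Real.abs_sin_le_one _
  rw [le_div_iff₀ hs0]
  exact h2

lemma myHasSum (a : ℝ) (ha : -1 < a) (ha' : a < 1) {x : ℝ} (hx0 : 0 ≤ x) (hx1 : x < 1) :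
    HasSum (fun k : ℕ => (U ℝ k).eval a * x ^ k) (1 / (x^2 - 2*a*x + 1)) := by
  obtain ⟨C, hC0, hC⟩ := myBound a ha ha'
  set c : ℕ → ℝ := fun k => (U ℝ (k:ℤ)).eval a with hc
  have hrec : ∀ n : ℕ, c (n+2) = 2 * a * c (n+1) - c n := by
    intro n
    have := Polynomial.Chebyshev.U_add_two ℝ (n:ℤ)
    have h2 : ((n+2 : ℕ) : ℤ) = (n:ℤ) + 2 := by push_cast; ring
    have h1 : ((n+1 : ℕ) : ℤ) = (n:ℤ) + 1 := by push_cast; ring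
    simp only [hc, h2, h1, this]
    simp [mul_assoc]
  set D : ℝ := x^2 - 2*a*x + 1 with hD
  have hD0 : 0 < D := by nlinarith [sq_nonneg (x - a), sq_nonneg x, sq_nonneg a]
  have hsummable : Summable (fun k : ℕ => c k * x ^ k) := by
    apply Summable.of_norm_bounded (g := fun k => C * x ^ k)
      ((summable_geometric_of_lt_one hx0 hx1).mul_left C)
    intro k
    rw [norm_mul, norm_pow, Real.norm_eq_abs, Real.norm_eq_abs, abs_of_nonneg hx0]
    exact mul_le_mul_of_nonneg_right (hC k) (by positivity)
  obtain ⟨L, hL⟩ := hsummable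
  have key : ∀ n : ℕ, D * (∑ k ∈ Finset.range (n+1), c k * x ^ k)
      = 1 - c (n+1) * x^(n+1) + c n * x^(n+2) := by
    intro n
    induction n with
    | zero =>
      have hc0 : c 0 = 1 := by simp [hc]
      have hc1 : c 1 = 2 * a := by
        simp only [hc]
        norm_num [Polynomial.Chebyshev.U_one]
      simp [hc0, hc1, hD]; ring
    | succ n ih =>
      rw [Finset.sum_range_succ, mul_add, ih, hrec n]
      ring
  have htail : Tendsto (fun n : ℕ => 1 - c (n+1) * x^(n+1) + c n * x^(n+2)) atTop (𝓝 1) := by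
    have hgeo : Tendsto (fun n : ℕ => x ^ n) atTop (𝓝 0) :=
      tendsto_pow_atTop_nhds_zero_of_lt_one hx0 hx1
    have t1 : Tendsto (fun n : ℕ => c (n+1) * x^(n+1)) atTop (𝓝 0) := by
      refine squeeze_zero_norm (a := fun n => C * x ^ (n+1)) ?_ ?_
      · intro n
        rw [norm_mul, norm_pow, Real.norm_eq_abs, Real.norm_eq_abs, abs_of_nonneg hx0]
        exact mul_le_mul_of_nonneg_right (hC _) (by positivity)
      · simpa [Function.comp_def] using ((hgeo.const_mul C).comp (tendsto_add_atTop_nat 1))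
    have t2 : Tendsto (fun n : ℕ => c n * x^(n+2)) atTop (𝓝 0) := by
      refine squeeze_zero_norm (a := fun n => C * x ^ (n+2)) ?_ ?_
      · intro n
        rw [norm_mul, norm_pow, Real.norm_eq_abs, Real.norm_eq_abs, abs_of_nonneg hx0]
        exact mul_le_mul_of_nonneg_right (hC _) (by positivity)
      · simpa [Function.comp_def] using ((hgeo.const_mul C).comp (tendsto_add_atTop_nat 2))
    simpa using (tendsto_const_nhds.sub t1).add t2
  have hpart : Tendsto (fun n : ℕ => D * (∑ k ∈ Finset.range (n+1), c k * x ^ k)) atTop (𝓝 (D * L)) := by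
    exact (hL.tendsto_sum_nat.comp (tendsto_add_atTop_nat 1)).const_mul D
  have : D * L = 1 := tendsto_nhds_unique ((funext key ▸ hpart)) htail
  have hLval : L = 1 / D := by field_simp at this ⊢; linarith
  exact hLval ▸ hL

open Polynomial.Chebyshev in
theorem stmt11 (a : ℝ) (ha : -1 < a) (ha' : a < 1) :
    ∫ x in (0:ℝ)..1, Real.log x ^ 2 / (x ^ 2 - 2 * a * x + 1) =
      2 * ∑' k : ℕ, (Polynomial.Chebyshev.U ℝ k).eval a / ((k : ℝ) + 1) ^ 3 := by
  obtain ⟨C, hC0, hC⟩ := myBound a ha ha'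
  set c : ℕ → ℝ := fun k => (U ℝ (k:ℤ)).eval a with hc
  have hInt : ∀ k : ℕ, IntegrableOn (fun x : ℝ => c k * (x ^ k * (Real.log x)^2)) (Ioo 0 1) := by
    intro k
    exact (((intervalIntegrable_iff_integrableOn_Ioc_of_le zero_le_one).mp
      (myIntble k)).mono_set Ioo_subset_Ioc_self).const_mul _
  have hIval : ∀ k : ℕ, ∫ x in Ioo (0:ℝ) 1, x ^ k * (Real.log x)^2 = 2/((k:ℝ)+1)^3 := by
    intro k
    rw [← integral_Ioc_eq_integral_Ioo, ← intervalIntegral.integral_of_le zero_le_one]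
    exact myIntegral k
  have hnorm : ∀ k : ℕ, ∫ x in Ioo (0:ℝ) 1, ‖c k * (x ^ k * (Real.log x)^2)‖
      = |c k| * (2/((k:ℝ)+1)^3) := by
    intro k
    rw [setIntegral_congr_fun (g := fun x : ℝ => |c k| * (x ^ k * (Real.log x)^2))
      measurableSet_Ioo ?_, MeasureTheory.integral_const_mul, hIval k]
    intro x hx
    simp only [norm_mul, Real.norm_eq_abs, norm_pow]
    rw [abs_of_nonneg hx.1.le, sq_abs]
  have hbase : Summable (fun k : ℕ => 1/((k:ℝ)+1)^3) := by
    have h0 : Summable (fun n : ℕ => 1/(n:ℝ)^3) :=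
      (Real.summable_one_div_nat_pow (p := 3)).2 (by norm_num)
    have h1 := (summable_nat_add_iff 1).2 h0
    refine h1.congr fun n => ?_
    push_cast
    ring
  have hsum_norm : Summable (fun k : ℕ => ∫ x in Ioo (0:ℝ) 1, ‖c k * (x ^ k * (Real.log x)^2)‖) := by
    rw [funext hnorm]
    refine Summable.of_nonneg_of_le (fun k => by positivity) (fun k => ?_)
      (hbase.mul_left (C * 2))
    calc |c k| * (2/((k:ℝ)+1)^3) ≤ C * (2/((k:ℝ)+1)^3) :=
          mul_le_mul_of_nonneg_right (hC k) (by positivity)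
      _ = C * 2 * (1/((k:ℝ)+1)^3) := by ring
  rw [intervalIntegral.integral_of_le zero_le_one, integral_Ioc_eq_integral_Ioo]
  have hpt : ∀ x ∈ Ioo (0:ℝ) 1, Real.log x ^ 2 / (x ^ 2 - 2*a*x + 1)
      = ∑' k : ℕ, c k * (x ^ k * (Real.log x)^2) := by
    intro x hx
    have h := (myHasSum a ha ha' hx.1.le hx.2).mul_right ((Real.log x)^2)
    have h2 : HasSum (fun k : ℕ => c k * (x ^ k * (Real.log x)^2))
        (1/(x^2-2*a*x+1) * (Real.log x)^2) := by
      refine h.congr_fun fun k => by ring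
    rw [h2.tsum_eq]
    ring
  rw [setIntegral_congr_fun measurableSet_Ioo hpt]
  rw [← integral_tsum_of_summable_integral_norm hInt hsum_norm]
  have hval : ∀ k : ℕ, ∫ x in Ioo (0:ℝ) 1, c k * (x ^ k * (Real.log x)^2)
      = 2 * (c k/((k:ℝ)+1)^3) := by
    intro k
    rw [MeasureTheory.integral_const_mul, hIval k]
    ring
  rw [tsum_congr hval, tsum_mul_left]
end

section
/- ∫₀¹ log²(x)/(1+x) dx = (3/2)ζ(3). -/
open Real MeasureTheory Set Filter Topology

lemma aux_hasDerivAt (n : ℕ) {x : ℝ} (hx : 0 < x) :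
    HasDerivAt (fun y : ℝ => y ^ (n+1) *
      (Real.log y ^ 2 / (n+1) - 2 * Real.log y / ((n:ℝ)+1)^2 + 2/((n:ℝ)+1)^3))
      (x ^ n * Real.log x ^ 2) x := by
  have hl : HasDerivAt Real.log x⁻¹ x := Real.hasDerivAt_log hx.ne'
  have h1 : HasDerivAt (fun y => Real.log y ^ 2 / (n+1) - 2 * Real.log y / ((n:ℝ)+1)^2
      + 2/((n:ℝ)+1)^3)
      (((2:ℕ) * Real.log x ^ (2-1) * x⁻¹) / ((n:ℝ)+1) - 2 * x⁻¹ / ((n:ℝ)+1)^2) x :=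
    (((hl.pow 2).div_const _).sub ((hl.const_mul 2).div_const _)).add_const _
  have h2 := (hasDerivAt_pow (n+1) x).mul h1
  refine HasDerivAt.congr_deriv h2 ?_
  have hm : ((n:ℝ)+1) ≠ 0 := by positivity
  push_cast
  field_simp
  ring

lemma log_sq_bound {x : ℝ} (hx : 0 < x) (hx1 : x ≤ 1) :
    Real.log x ^ 2 ≤ 16 * x ^ (-(1/2) : ℝ) := by
  set t : ℝ := -Real.log x with ht
  have ht0 : 0 ≤ t := by
    simp only [ht, neg_nonneg]
    exact Real.log_nonpos hx.le hx1
  have hxr : x ^ (-(1/2) : ℝ) = Real.exp (t/2) := by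
    rw [Real.rpow_def_of_pos hx]
    congr 1
    simp [ht]; ring
  have hE : Real.exp (t/2) = Real.exp (t/4) * Real.exp (t/4) := by
    rw [← Real.exp_add]; ring_nf
  have h1 : t/4 + 1 ≤ Real.exp (t/4) := Real.add_one_le_exp _
  have h2 : (0:ℝ) < Real.exp (t/4) := Real.exp_pos _
  have hlog : Real.log x ^ 2 = t ^ 2 := by rw [ht]; ring
  rw [hlog, hxr, hE]
  nlinarith

lemma integrableOn_pow_mul_log_sq (n : ℕ) :
    IntegrableOn (fun x : ℝ => x ^ n * Real.log x ^ 2) (Set.Ioc 0 1) := by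
  have hg : IntegrableOn (fun x : ℝ => 16 * x ^ (-(1/2) : ℝ)) (Set.Ioc (0:ℝ) 1) := by
    have h := (intervalIntegral.intervalIntegrable_rpow'
      (show (-1:ℝ) < -(1/2) by norm_num) (a := 0) (b := 1)).const_mul 16
    rw [intervalIntegrable_iff_integrableOn_Ioc_of_le (by norm_num)] at h
    exact h
  have hmeas : AEStronglyMeasurable (fun x : ℝ => x ^ n * Real.log x ^ 2)
      (volume.restrict (Set.Ioc 0 1)) :=
    ((measurable_id.pow_const n).mul (Real.measurable_log.pow_const 2)).aestronglyMeasurable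
  refine Integrable.mono hg hmeas ?_
  rw [ae_restrict_iff' measurableSet_Ioc]
  refine ae_of_all _ fun x hx => ?_
  have hx0 : 0 < x := hx.1
  have hx1 : x ≤ 1 := hx.2
  have h1 : ‖x ^ n * Real.log x ^ 2‖ = x ^ n * Real.log x ^ 2 := by
    rw [Real.norm_of_nonneg]; positivity
  have h2 : x ^ n * Real.log x ^ 2 ≤ Real.log x ^ 2 := by
    have : x ^ n ≤ 1 := pow_le_one₀ hx0.le hx1
    nlinarith [sq_nonneg (Real.log x)]
  have h3 : (16:ℝ) * x ^ (-(1/2):ℝ) ≤ ‖16 * x ^ (-(1/2):ℝ)‖ := le_abs_self _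
  calc ‖x ^ n * Real.log x ^ 2‖ = x ^ n * Real.log x ^ 2 := h1
    _ ≤ Real.log x ^ 2 := h2
    _ ≤ 16 * x ^ (-(1/2):ℝ) := log_sq_bound hx0 hx1
    _ ≤ ‖16 * x ^ (-(1/2):ℝ)‖ := h3
lemma integral_pow_mul_log_sq (n : ℕ) :
    ∫ x in Set.Ioc (0:ℝ) 1, x ^ n * Real.log x ^ 2 = 2 / ((n:ℝ)+1)^3 := by
  set F : ℝ → ℝ := fun y => y ^ (n+1) *
      (Real.log y ^ 2 / (n+1) - 2 * Real.log y / ((n:ℝ)+1)^2 + 2/((n:ℝ)+1)^3) with hF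
  set f : ℝ → ℝ := fun x => x ^ n * Real.log x ^ 2 with hf
  have hF1 : F 1 = 2/((n:ℝ)+1)^3 := by simp [hF]
  set ε : ℕ → ℝ := fun k => 1 / ((k:ℝ)+1) with hε
  have hε0 : ∀ k, 0 < ε k := fun k => by positivity
  have hε1 : ∀ k, ε k ≤ 1 := fun k => by
    rw [hε, div_le_one (by positivity)]; simp
  have hseq : ∀ k, ∫ x in Set.Ioc (ε k) 1, f x = F 1 - F (ε k) := by
    intro k
    rw [← intervalIntegral.integral_of_le (hε1 k)]
    apply intervalIntegral.integral_eq_sub_of_hasDerivAt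
    · intro x hx
      rw [Set.uIcc_of_le (hε1 k)] at hx
      exact aux_hasDerivAt n (lt_of_lt_of_le (hε0 k) hx.1)
    · rw [intervalIntegrable_iff_integrableOn_Ioc_of_le (hε1 k)]
      exact (integrableOn_pow_mul_log_sq n).mono_set (Set.Ioc_subset_Ioc_left (hε0 k).le)
  have hεtend : Tendsto ε atTop (𝓝[>] (0:ℝ)) := by
    apply tendsto_nhdsWithin_of_tendsto_nhds_of_eventually_within
    · exact tendsto_one_div_add_atTop_nhds_zero_nat
    · exact Eventually.of_forall fun k => hε0 k
  have hFtend : Tendsto F (𝓝[>] (0:ℝ)) (𝓝 0) := by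
    have hr : (0:ℝ) < ((n:ℝ)+1)/2 := by positivity
    have L1 := tendsto_log_mul_rpow_nhdsGT_zero hr
    have L2 := tendsto_log_mul_rpow_nhdsGT_zero (show (0:ℝ) < (n:ℝ)+1 by positivity)
    have L3 : Tendsto (fun x : ℝ => x ^ (n+1)) (𝓝[>] (0:ℝ)) (𝓝 0) := by
      have := ((continuous_pow (n+1)).tendsto (0:ℝ)).mono_left
        (nhdsWithin_le_nhds (s := Set.Ioi (0:ℝ)))
      simpa using this
    have key : Tendsto (fun x : ℝ => (Real.log x * x ^ (((n:ℝ)+1)/2))^2 / ((n:ℝ)+1)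
        - 2 * (Real.log x * x ^ ((n:ℝ)+1)) / ((n:ℝ)+1)^2 + x^(n+1) * (2/((n:ℝ)+1)^3))
        (𝓝[>] (0:ℝ)) (𝓝 0) := by
      have := (((L1.pow 2).div_const ((n:ℝ)+1)).sub
        ((L2.const_mul 2).div_const (((n:ℝ)+1)^2))).add (L3.mul_const (2/((n:ℝ)+1)^3))
      simpa using this
    apply key.congr'
    filter_upwards [self_mem_nhdsWithin] with x hx
    have hx0 : (0:ℝ) < x := hx
    have e1 : (x ^ (((n:ℝ)+1)/2))^2 = x ^ (n+1) := by
      rw [← Real.rpow_natCast (x ^ (((n:ℝ)+1)/2)) 2, ← Real.rpow_mul hx0.le,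
        ← Real.rpow_natCast x (n+1)]
      congr 1
      push_cast; ring
    have e2 : x ^ ((n:ℝ)+1) = x ^ (n+1) := by
      rw [← Real.rpow_natCast x (n+1)]
      congr 1; push_cast; ring
    rw [hF]
    simp only [mul_pow, e1, e2]
    ring
  have htend1 : Tendsto (fun k => ∫ x in Set.Ioc (ε k) 1, f x) atTop (𝓝 (F 1 - 0)) := by
    simp only [hseq]
    exact tendsto_const_nhds.sub (hFtend.comp hεtend)
  have hUnion : (⋃ k, Set.Ioc (ε k) 1) = Set.Ioc (0:ℝ) 1 := by
    ext x
    simp only [Set.mem_iUnion, Set.mem_Ioc]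
    constructor
    · rintro ⟨k, hk1, hk2⟩
      exact ⟨lt_trans (hε0 k) hk1, hk2⟩
    · rintro ⟨hx0, hx1⟩
      obtain ⟨k, hk⟩ := exists_nat_gt (1/x)
      refine ⟨k, ?_, hx1⟩
      rw [hε, div_lt_iff₀ (by positivity)]
      rw [div_lt_iff₀ hx0] at hk
      nlinarith
  have hmono : Monotone (fun k => Set.Ioc (ε k) 1) := by
    intro a b hab
    apply Set.Ioc_subset_Ioc_left
    apply one_div_le_one_div_of_le (by positivity)
    exact_mod_cast by exact_mod_cast add_le_add_left (Nat.cast_le.mpr hab) 1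
  have htend2 : Tendsto (fun k => ∫ x in Set.Ioc (ε k) 1, f x) atTop
      (𝓝 (∫ x in Set.Ioc (0:ℝ) 1, f x)) := by
    have h := tendsto_setIntegral_of_monotone (fun k => measurableSet_Ioc) hmono
      (f := f) (μ := volume) (by rw [hUnion]; exact integrableOn_pow_mul_log_sq n)
    rwa [hUnion] at h
  have := tendsto_nhds_unique htend2 htend1
  rw [this, hF1, sub_zero]
theorem stmt12 :
    ∫ x in (0:ℝ)..1, Real.log x ^ 2 / (1 + x) =
      (3 / 2) * ∑' k : ℕ, 1 / ((k : ℝ) + 1) ^ 3 := by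
  set a : ℕ → ℝ := fun k => 1 / ((k : ℝ) + 1) ^ 3 with ha_def
  have ha : Summable a := by
    have h : Summable (fun n : ℕ => 1 / (n:ℝ)^3) :=
      Real.summable_one_div_nat_pow.mpr (by norm_num)
    have h2 := (summable_nat_add_iff 1).mpr h
    apply h2.congr
    intro k
    push_cast
    ring
  have hinj_e : Function.Injective (fun k : ℕ => 2*k) := fun x y h => by dsimp at h; omega
  have hinj_o : Function.Injective (fun k : ℕ => 2*k+1) := fun x y h => by dsimp at h; omega
  have he : Summable (fun k => a (2*k)) := ha.comp_injective hinj_e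
  have ho : Summable (fun k => a (2*k+1)) := ha.comp_injective hinj_o
  have hS := tsum_even_add_odd he ho
  have hodd : ∑' m, a (2*m+1) = (∑' k, a k) / 8 := by
    have h1 : ∀ m : ℕ, a (2*m+1) = (1/8) * a m := by
      intro m
      simp only [ha_def]
      push_cast
      have : ((m:ℝ)+1) ≠ 0 := by positivity
      field_simp
      ring
    rw [tsum_congr h1, tsum_mul_left]
    ring
  set g : ℕ → ℝ → ℝ := fun m x => (x^(2*m) - x^(2*m+1)) * Real.log x ^ 2 with hg_def
  have hg_ptsub : ∀ m x, g m x = x^(2*m) * Real.log x ^ 2 - x^(2*m+1) * Real.log x ^ 2 := by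
    intro m x; simp only [hg_def]; ring
  have hgint : ∀ m, IntegrableOn (g m) (Set.Ioc (0:ℝ) 1) := by
    intro m
    have := (integrableOn_pow_mul_log_sq (2*m)).sub (integrableOn_pow_mul_log_sq (2*m+1))
    apply this.congr
    filter_upwards with x
    simp only [Pi.sub_apply]
    exact (hg_ptsub m x).symm
  have hgval : ∀ m, ∫ x in Set.Ioc (0:ℝ) 1, g m x = 2 * a (2*m) - 2 * a (2*m+1) := by
    intro m
    simp_rw [hg_ptsub]
    rw [integral_sub ((integrableOn_pow_mul_log_sq (2*m)))
      ((integrableOn_pow_mul_log_sq (2*m+1))),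
      integral_pow_mul_log_sq, integral_pow_mul_log_sq]
    simp only [ha_def]
    push_cast
    ring
  have hgnn : ∀ m, ∀ x ∈ Set.Ioc (0:ℝ) 1, 0 ≤ g m x := by
    intro m x hx
    have h1 : x^(2*m+1) ≤ x^(2*m) :=
      pow_le_pow_of_le_one hx.1.le hx.2 (by omega)
    have h2 := sq_nonneg (Real.log x)
    simp only [hg_def]
    nlinarith
  have hmeasg : ∀ m, AEStronglyMeasurable (g m) (volume.restrict (Set.Ioc 0 1)) := fun m =>
    (((measurable_id.pow_const _).sub (measurable_id.pow_const _)).mul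
      (Real.measurable_log.pow_const 2)).aestronglyMeasurable
  have hc_nonneg : ∀ m : ℕ, 0 ≤ 2 * a (2*m) - 2 * a (2*m+1) := by
    intro m
    have : a (2*m+1) ≤ a (2*m) := by
      simp only [ha_def]
      apply one_div_le_one_div_of_le (by positivity)
      push_cast
      nlinarith [Nat.cast_nonneg (α := ℝ) m]
    linarith
  have hc_sum : Summable (fun m : ℕ => 2 * a (2*m) - 2 * a (2*m+1)) :=
    (he.mul_left 2).sub (ho.mul_left 2)
  have hlint : ∀ m, ∫⁻ x in Set.Ioc (0:ℝ) 1, ‖g m x‖₊ =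
      ENNReal.ofReal (2 * a (2*m) - 2 * a (2*m+1)) := by
    intro m
    have hnn_ae : 0 ≤ᵐ[volume.restrict (Set.Ioc (0:ℝ) 1)] g m :=
      (ae_restrict_iff' measurableSet_Ioc).mpr (ae_of_all _ (hgnn m))
    have h1 : ∫⁻ x in Set.Ioc (0:ℝ) 1, ‖g m x‖₊ =
        ∫⁻ x in Set.Ioc (0:ℝ) 1, ENNReal.ofReal (g m x) := by
      apply lintegral_congr_ae
      filter_upwards [hnn_ae] with x hx
      rw [← Real.enorm_eq_ofReal hx]; rfl
    rw [h1, ← ofReal_integral_eq_lintegral_ofReal (hgint m) hnn_ae, hgval m]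
  have hfin : ∑' m, ∫⁻ x in Set.Ioc (0:ℝ) 1, ‖g m x‖₊ ≠ ⊤ := by
    simp only [hlint]
    rw [← ENNReal.ofReal_tsum_of_nonneg hc_nonneg hc_sum]
    exact ENNReal.ofReal_ne_top
  have hinter : ∫ x in Set.Ioc (0:ℝ) 1, ∑' m, g m x = ∑' m, ∫ x in Set.Ioc (0:ℝ) 1, g m x :=
    integral_tsum hmeasg hfin
  have hpt : ∀ x ∈ Set.Ioc (0:ℝ) 1, Real.log x ^ 2 / (1+x) = ∑' m, g m x := by
    intro x hx
    rcases eq_or_lt_of_le hx.2 with h1 | h1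
    · subst h1
      simp [hg_def]
    · have hx0 : 0 < x := hx.1
      have hx2 : x^2 < 1 := by nlinarith
      have hs : Summable (fun m : ℕ => (x^2)^m) :=
        summable_geometric_of_lt_one (by positivity) hx2
      have hse : Summable (fun m : ℕ => x^(2*m)) := by
        apply hs.congr; intro m; rw [← pow_mul]
      have hso : Summable (fun m : ℕ => x^(2*m+1)) := by
        apply (hs.mul_right x).congr
        intro m; rw [← pow_mul, ← pow_succ]
      have hsum1 : ∑' m : ℕ, x^(2*m) = (1 - x^2)⁻¹ := by
        rw [tsum_congr (fun m : ℕ => pow_mul x 2 m)]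
        exact tsum_geometric_of_lt_one (by positivity) hx2
      have hsum2 : ∑' m : ℕ, x^(2*m+1) = (1 - x^2)⁻¹ * x := by
        have h2 : ∀ m : ℕ, x^(2*m+1) = (x^2)^m * x := by
          intro m; rw [← pow_mul, ← pow_succ]
        rw [tsum_congr h2, tsum_mul_right, tsum_geometric_of_lt_one (by positivity) hx2]
      have hsub : ∑' m : ℕ, (x^(2*m) - x^(2*m+1)) = (1-x^2)⁻¹ - (1-x^2)⁻¹ * x := by
        rw [Summable.tsum_sub hse hso, hsum1, hsum2]
      simp only [hg_def]
      rw [tsum_mul_right, hsub]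
      have hne : (1:ℝ) - x^2 ≠ 0 := by nlinarith
      have hne2 : (1:ℝ) + x ≠ 0 := by positivity
      field_simp
      ring
  rw [intervalIntegral.integral_of_le (by norm_num : (0:ℝ) ≤ 1),
    setIntegral_congr_fun measurableSet_Ioc hpt, hinter, tsum_congr hgval,
    Summable.tsum_sub (he.mul_left 2) (ho.mul_left 2), tsum_mul_left, tsum_mul_left]
  linarith
end

section
/- ∫₀¹ log²(x)/(x²-x+1) dx = 10π³/(81√3). -/
open Real Set MeasureTheory

lemma exp_neg_image : (fun t : ℝ => Real.exp (-t)) '' Set.Ioi 0 = Set.Ioo 0 1 := by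
  ext x
  simp only [Set.mem_image, Set.mem_Ioi, Set.mem_Ioo]
  constructor
  · rintro ⟨t, ht, rfl⟩
    exact ⟨Real.exp_pos _, by rw [Real.exp_lt_one_iff]; linarith⟩
  · rintro ⟨hx0, hx1⟩
    refine ⟨-Real.log x, ?_, by rw [neg_neg, Real.exp_log hx0]⟩
    have := Real.log_neg hx0 hx1
    linarith

lemma exp_neg_deriv (t : ℝ) : HasDerivAt (fun t : ℝ => Real.exp (-t)) (-Real.exp (-t)) t := by
  simpa [Function.comp_def] using (Real.hasDerivAt_exp (-t)).comp t (hasDerivAt_neg t)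

lemma exp_neg_inj : Set.InjOn (fun t : ℝ => Real.exp (-t)) (Set.Ioi 0) :=
  fun a _ b _ h => neg_injective (Real.exp_injective h)

lemma moment_aux (k : ℕ) (t : ℝ) (ht : t ∈ Set.Ioi (0:ℝ)) :
    |(-Real.exp (-t))| • ((Real.exp (-t)) ^ k * Real.log (Real.exp (-t)) ^ 2)
      = t ^ ((3:ℝ) - 1) * Real.exp (-(((k:ℝ)+1) * t)) := by
  have ht0 : (0:ℝ) < t := ht
  rw [abs_neg, abs_of_pos (Real.exp_pos _), Real.log_exp, smul_eq_mul,
    show ((3:ℝ) - 1) = ((2:ℕ):ℝ) by norm_num, Real.rpow_natCast,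
    ← Real.exp_nat_mul]
  rw [show (-(((k:ℝ)+1) * t)) = (k:ℝ)*(-t) + (-t) by ring, Real.exp_add]
  ring

lemma moment (k : ℕ) : ∫ x in Set.Ioo (0:ℝ) 1, x ^ k * Real.log x ^ 2 = 2 / ((k:ℝ)+1)^3 := by
  rw [← exp_neg_image,
    MeasureTheory.integral_image_eq_integral_abs_deriv_smul measurableSet_Ioi
      (fun t _ => (exp_neg_deriv t).hasDerivWithinAt) exp_neg_inj]
  rw [MeasureTheory.setIntegral_congr_fun measurableSet_Ioi (moment_aux k)]
  rw [integral_rpow_mul_exp_neg_mul_Ioi (by norm_num : (0:ℝ) < 3) (by positivity : (0:ℝ) < (k:ℝ)+1)]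
  rw [show (3:ℝ) = ((2:ℕ)+1:ℝ) by norm_num, Real.Gamma_nat_eq_factorial]
  rw [show ((2:ℕ)+1:ℝ) = ((3:ℕ):ℝ) by norm_num, Real.rpow_natCast]
  norm_num [Nat.factorial]
  rw [inv_mul_eq_div]

lemma moment_int (k : ℕ) :
    MeasureTheory.IntegrableOn (fun x : ℝ => x ^ k * Real.log x ^ 2) (Set.Ioo 0 1) := by
  rw [← exp_neg_image,
    MeasureTheory.integrableOn_image_iff_integrableOn_abs_deriv_smul measurableSet_Ioi
      (fun t _ => (exp_neg_deriv t).hasDerivWithinAt) exp_neg_inj]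
  have h := integrableOn_rpow_mul_exp_neg_mul_rpow (p := 1) (s := 2) (b := (k:ℝ)+1)
    (by norm_num) zero_lt_one (by positivity)
  refine h.congr_fun (fun t ht => ?_) measurableSet_Ioi
  have ht0 : (0:ℝ) < t := ht
  dsimp only
  rw [Real.rpow_one, Real.rpow_two, show (-((k:ℝ)+1) * t) = (k:ℝ)*(-t) + (-t) by ring,
    Real.exp_add, abs_neg, abs_of_pos (Real.exp_pos _), Real.log_exp, smul_eq_mul,
    ← Real.exp_nat_mul]
  ring

theorem bernoulli_three_eval_one_sixth :
    (Polynomial.bernoulli 3).eval (1 / 6) = 5 / 108 := by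
  simp_rw [Polynomial.bernoulli, Finset.sum_range_succ, Polynomial.eval_add,
    Polynomial.eval_monomial]
  rw [Finset.sum_range_zero, Polynomial.eval_zero, zero_add, bernoulli_one]
  rw [bernoulli_eq_bernoulli'_of_ne_one zero_ne_one, bernoulli'_zero,
    bernoulli_eq_bernoulli'_of_ne_one (by decide : 2 ≠ 1), bernoulli'_two,
    bernoulli_eq_bernoulli'_of_ne_one (by decide : 3 ≠ 1), bernoulli'_three]
  norm_num

theorem sinsum :
    HasSum (fun n : ℕ => (1 : ℝ) / (n : ℝ) ^ 3 * Real.sin (π * n / 3)) (5 * π ^ 3 / 162) := by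
  apply (congr_arg₂ HasSum ?_ ?_).to_iff.mp <|
    hasSum_one_div_nat_pow_mul_sin one_ne_zero (?_ : 1 / 6 ∈ Icc (0 : ℝ) 1)
  · ext1 n
    norm_num
    left
    congr 1
    ring
  · have : (1 / 6 : ℝ) = (algebraMap ℚ ℝ) (1 / 6 : ℚ) := by norm_num
    rw [this, mul_pow, Polynomial.eval_map, Polynomial.eval₂_at_apply, (by decide : 2 * 1 + 1 = 3),
      bernoulli_three_eval_one_sixth]
    norm_num [Nat.factorial]; field_simp; ring
  · rw [mem_Icc]; constructor
    · linarith [pi_pos]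
    · linarith [pi_pos]

lemma sin_shift_s13 (n : ℕ) (c : ℝ) : Real.sin (n * π + c) = (-1) ^ n * Real.sin c := by
  have := Real.sin_nat_mul_pi_sub (-c) n
  simpa [sub_neg_eq_add, Real.sin_neg] using this

lemma groupedSum :
    HasSum (fun n : ℕ => (-1 : ℝ) ^ n *
        (2 / (3 * (n : ℝ) + 1) ^ 3 + 2 / (3 * (n : ℝ) + 2) ^ 3))
      (10 * π ^ 3 / (81 * Real.sqrt 3)) := by
  have s3 : (0:ℝ) < Real.sqrt 3 := Real.sqrt_pos.mpr (by norm_num)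
  set h : ℕ → ℝ := fun m => (4 / Real.sqrt 3) * ((1 : ℝ) / (m : ℝ) ^ 3 * Real.sin (π * m / 3))
    with hh_def
  have hh : HasSum h (10 * π ^ 3 / (81 * Real.sqrt 3)) := by
    have := sinsum.mul_left (4 / Real.sqrt 3)
    convert this using 1
    · rfl
    ring
  have hcomp : HasSum (h ∘ (Nat.divModEquiv 3).symm) (10 * π ^ 3 / (81 * Real.sqrt 3)) :=
    (Equiv.hasSum_iff _).mpr hh
  have hfib := hcomp.prod_fiberwise (g := fun n => ∑ j : Fin 3, h (n * 3 + (j : ℕ)))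
    (fun n => by simpa using hasSum_fintype (fun j : Fin 3 => (h ∘ (Nat.divModEquiv 3).symm) (n, j)))
  convert hfib using 2 with n
  rw [Fin.sum_univ_three]
  have e0 : n * 3 + (((0:Fin 3)):ℕ) = n * 3 := rfl
  have e1 : n * 3 + (((1:Fin 3)):ℕ) = n * 3 + 1 := rfl
  have e2 : n * 3 + (((2:Fin 3)):ℕ) = n * 3 + 2 := rfl
  rw [e0, e1, e2]
  have h3 : (Real.sqrt 3) ^ 2 = 3 := Real.sq_sqrt (by norm_num)
  have h0 : h (n * 3) = 0 := by
    have : π * ((n * 3 : ℕ) : ℝ) / 3 = (n : ℝ) * π := by push_cast; ring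
    rw [hh_def]
    simp only [this, Real.sin_nat_mul_pi, mul_zero]
  have h1 : h (n * 3 + 1) = (-1) ^ n * (2 / (3 * (n:ℝ) + 1) ^ 3) := by
    have harg : π * ((n * 3 + 1 : ℕ) : ℝ) / 3 = (n : ℝ) * π + π / 3 := by push_cast; ring
    have hc : ((n * 3 + 1 : ℕ) : ℝ) = 3 * (n:ℝ) + 1 := by push_cast; ring
    rw [hh_def]
    simp only [harg, sin_shift_s13, Real.sin_pi_div_three]
    rw [hc]
    have hne : (3 * (n:ℝ) + 1) ^ 3 ≠ 0 := by positivity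
    field_simp
    ring
  have h2 : h (n * 3 + 2) = (-1) ^ n * (2 / (3 * (n:ℝ) + 2) ^ 3) := by
    have harg : π * ((n * 3 + 2 : ℕ) : ℝ) / 3 = (n : ℝ) * π + (π - π / 3) := by push_cast; ring
    have hc : ((n * 3 + 2 : ℕ) : ℝ) = 3 * (n:ℝ) + 2 := by push_cast; ring
    rw [hh_def]
    simp only [harg, sin_shift_s13, Real.sin_pi_sub, Real.sin_pi_div_three]
    rw [hc]
    have hne : (3 * (n:ℝ) + 2) ^ 3 ≠ 0 := by positivity
    field_simp
    ring
  rw [h0, h1, h2]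
  ring

noncomputable def FF (n : ℕ) (x : ℝ) : ℝ :=
  (-1) ^ n * (x ^ (3 * n) * Real.log x ^ 2 + x ^ (3 * n + 1) * Real.log x ^ 2)


lemma FF_int (n : ℕ) : MeasureTheory.IntegrableOn (FF n) (Set.Ioo 0 1) := by
  unfold FF
  exact ((moment_int (3*n)).add (moment_int (3*n+1))).const_mul _

lemma FF_integral (n : ℕ) :
    ∫ x in Set.Ioo (0:ℝ) 1, FF n x
      = (-1 : ℝ) ^ n * (2 / (3 * (n : ℝ) + 1) ^ 3 + 2 / (3 * (n : ℝ) + 2) ^ 3) := by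
  unfold FF
  rw [MeasureTheory.integral_const_mul,
    MeasureTheory.integral_add (moment_int (3*n)) (moment_int (3*n+1)), moment, moment]
  push_cast
  ring_nf

lemma FF_norm_integral (n : ℕ) :
    ∫ x in Set.Ioo (0:ℝ) 1, ‖FF n x‖
      = 2 / (3 * (n : ℝ) + 1) ^ 3 + 2 / (3 * (n : ℝ) + 2) ^ 3 := by
  rw [MeasureTheory.setIntegral_congr_fun measurableSet_Ioo
    (g := fun x : ℝ => x ^ (3*n) * Real.log x ^ 2 + x ^ (3*n+1) * Real.log x ^ 2) ?_]
  · rw [MeasureTheory.integral_add (moment_int (3*n)) (moment_int (3*n+1)), moment, moment]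
    push_cast
    ring_nf
  · intro x hx
    have hx0 : (0:ℝ) < x := hx.1
    show ‖FF n x‖ = x ^ (3*n) * Real.log x ^ 2 + x ^ (3*n+1) * Real.log x ^ 2
    have : ‖FF n x‖ = |(-1:ℝ)^n| * |x ^ (3*n) * Real.log x ^ 2 + x ^ (3*n+1) * Real.log x ^ 2| := by
      rw [FF, Real.norm_eq_abs, abs_mul]
    rw [this, abs_pow, abs_neg, abs_one, one_pow, one_mul, abs_of_nonneg (by positivity)]

lemma FF_summable :
    Summable (fun n : ℕ => 2 / (3 * (n : ℝ) + 1) ^ 3 + 2 / (3 * (n : ℝ) + 2) ^ 3) := by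
  have h1 : Summable (fun n : ℕ => 4 / ((n : ℝ) + 1) ^ 3) := by
    have := (Real.summable_one_div_nat_pow (p := 3)).mpr (by norm_num)
    have h2 := ((summable_nat_add_iff 1).mpr this).mul_left 4
    simpa [div_eq_mul_inv] using h2
  refine Summable.of_nonneg_of_le (fun n => by positivity) (fun n => ?_) h1
  have hn : ((n:ℝ) + 1) ^ 3 ≤ (3 * (n:ℝ) + 1) ^ 3 := by
    apply pow_le_pow_left₀ (by positivity)
    linarith [Nat.cast_nonneg (α := ℝ) n]
  have hn2 : ((n:ℝ) + 1) ^ 3 ≤ (3 * (n:ℝ) + 2) ^ 3 := by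
    apply pow_le_pow_left₀ (by positivity)
    linarith [Nat.cast_nonneg (α := ℝ) n]
  have a1 : 2 / (3 * (n:ℝ) + 1) ^ 3 ≤ 2 / ((n:ℝ) + 1) ^ 3 :=
    div_le_div_of_nonneg_left (by norm_num) (by positivity) hn
  have a2 : 2 / (3 * (n:ℝ) + 2) ^ 3 ≤ 2 / ((n:ℝ) + 1) ^ 3 :=
    div_le_div_of_nonneg_left (by norm_num) (by positivity) hn2
  have : 4 / ((n:ℝ) + 1) ^ 3 = 2 / ((n:ℝ) + 1) ^ 3 + 2 / ((n:ℝ) + 1) ^ 3 := by ring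
  rw [this]
  exact add_le_add a1 a2

lemma FF_tsum (x : ℝ) (hx : x ∈ Set.Ioo (0:ℝ) 1) :
    ∑' n, FF n x = Real.log x ^ 2 / (x ^ 2 - x + 1) := by
  obtain ⟨hx0, hx1⟩ := hx
  have hx3 : ‖-x ^ 3‖ < 1 := by
    rw [norm_neg, Real.norm_eq_abs, abs_of_nonneg (by positivity)]
    exact pow_lt_one₀ (le_of_lt hx0) hx1 (by norm_num)
  have hq : (0:ℝ) < x ^ 2 - x + 1 := by nlinarith
  have hg := (hasSum_geometric_of_norm_lt_one hx3).mul_right ((1 + x) * Real.log x ^ 2)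
  have hfs : HasSum (fun n => FF n x) ((1 - -x ^ 3)⁻¹ * ((1 + x) * Real.log x ^ 2)) := by
    refine hg.congr_fun fun n => ?_
    have hpow : ((-x^3):ℝ)^n = (-1:ℝ)^n * x^(3*n) := by rw [neg_pow, ← pow_mul]
    unfold FF
    rw [hpow]
    ring
  rw [hfs.tsum_eq]
  have hden : 1 - -x ^ 3 = (1 + x) * (x ^ 2 - x + 1) := by ring
  rw [hden, mul_inv, mul_comm, mul_assoc]
  have h1x : (1 + x) ≠ 0 := by positivity
  field_simp

theorem stmt13 :
    ∫ x in (0:ℝ)..1, Real.log x ^ 2 / (x ^ 2 - x + 1) =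
      10 * Real.pi ^ 3 / (81 * Real.sqrt 3) := by
  rw [intervalIntegral.integral_of_le zero_le_one, MeasureTheory.integral_Ioc_eq_integral_Ioo]
  have hsummable : Summable fun n : ℕ => ∫ x in Set.Ioo (0:ℝ) 1, ‖FF n x‖ := by
    rw [funext FF_norm_integral]
    exact FF_summable
  have hsum := MeasureTheory.hasSum_integral_of_summable_integral_norm
    (μ := MeasureTheory.volume.restrict (Set.Ioo (0:ℝ) 1)) FF_int hsummable
  rw [MeasureTheory.setIntegral_congr_fun measurableSet_Ioo
    (g := fun x : ℝ => ∑' n, FF n x) (fun x hx => (FF_tsum x hx).symm)]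
  refine HasSum.unique ?_ groupedSum
  exact hsum.congr_fun fun n => (FF_integral n).symm
end

section
/- ∫₀¹ (1-x)/(1-x⁶)·log²(x) dx = (8√3·π³ + 351·ζ(3))/486. -/
open Real MeasureTheory Filter Set Topology

-- antiderivative
noncomputable def G (n : ℕ) (x : ℝ) : ℝ :=
  x ^ (n+1) * (Real.log x ^ 2 / (n+1) - 2 * Real.log x / (n+1)^2 + 2 / (n+1)^3)

lemma G_deriv (n : ℕ) {x : ℝ} (hx : 0 < x) :
    HasDerivAt (G n) (x ^ n * Real.log x ^ 2) x := by
  have hl : HasDerivAt Real.log x⁻¹ x := Real.hasDerivAt_log hx.ne'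
  have hp : HasDerivAt (fun y : ℝ => y ^ (n+1)) ((n+1) * x ^ n) x := by
    simpa using hasDerivAt_pow (n+1) x
  have h2 : HasDerivAt (fun y => Real.log y ^ 2 / (n+1) - 2 * Real.log y / (n+1)^2 + 2 / (n+1)^3)
      ((2 * Real.log x * x⁻¹) / (n+1) - 2 * x⁻¹ / (n+1)^2 + 0) x := by
    apply HasDerivAt.add
    · apply HasDerivAt.sub
      · simpa [pow_two] using ((hl.pow 2).div_const ((n:ℝ)+1))
      · simpa using ((hl.const_mul (2:ℝ)).div_const (((n:ℝ)+1)^2))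
    · exact hasDerivAt_const _ _
  have : HasDerivAt (G n) _ x := hp.mul h2
  convert this using 1
  have hne : ((n:ℝ)+1) ≠ 0 := by positivity
  field_simp
  ring

lemma tendsto_pow_log_sq : ∀ n : ℕ, Tendsto (fun x : ℝ => x ^ (n+1) * Real.log x ^ 2)
    (𝓝[>] (0:ℝ)) (𝓝 0) := by
  intro n
  have h1 : Tendsto (fun x : ℝ => (Real.log x * x ^ ((1:ℝ)/2)) ^ 2 * x ^ n)
      (𝓝[>] (0:ℝ)) (𝓝 0) := by
    have := (tendsto_log_mul_rpow_nhdsGT_zero (by norm_num : (0:ℝ) < 1/2)).pow 2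
    have h2 : Tendsto (fun x : ℝ => x ^ n) (𝓝[>] (0:ℝ)) (𝓝 ((0:ℝ)^n)) :=
      ((continuous_pow n).tendsto 0).mono_left nhdsWithin_le_nhds
    simpa using this.mul h2
  refine h1.congr' ?_
  filter_upwards [self_mem_nhdsWithin] with x (hx : 0 < x)
  rw [mul_pow, ← Real.rpow_natCast (x ^ ((1:ℝ)/2)) 2, ← Real.rpow_mul hx.le]
  norm_num
  ring

lemma tendsto_pow_log : ∀ n : ℕ, Tendsto (fun x : ℝ => x ^ (n+1) * Real.log x)
    (𝓝[>] (0:ℝ)) (𝓝 0) := by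
  intro n
  have h1 : Tendsto (fun x : ℝ => (Real.log x * x ^ ((1:ℝ))) * x ^ n)
      (𝓝[>] (0:ℝ)) (𝓝 0) := by
    have := tendsto_log_mul_rpow_nhdsGT_zero (by norm_num : (0:ℝ) < 1)
    have h2 : Tendsto (fun x : ℝ => x ^ n) (𝓝[>] (0:ℝ)) (𝓝 ((0:ℝ)^n)) :=
      ((continuous_pow n).tendsto 0).mono_left nhdsWithin_le_nhds
    simpa using this.mul h2
  refine h1.congr' ?_
  filter_upwards [self_mem_nhdsWithin] with x (hx : 0 < x)
  rw [Real.rpow_one]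
  ring

lemma G_cont (n : ℕ) : ContinuousOn (G n) (Icc 0 1) := by
  intro x hx
  rcases eq_or_lt_of_le hx.1 with h0 | h0
  · -- x = 0
    subst h0
    have ht : Tendsto (G n) (𝓝[>] (0:ℝ)) (𝓝 0) := by
      have := ((tendsto_pow_log_sq n).div_const ((n:ℝ)+1)).sub
        (((tendsto_pow_log n).const_mul 2).div_const (((n:ℝ)+1)^2))
      have h2 : Tendsto (fun x : ℝ => 2 * x ^ (n+1) / ((n:ℝ)+1)^3) (𝓝[>] (0:ℝ)) (𝓝 0) := by
        have : Tendsto (fun x : ℝ => x ^ (n+1)) (𝓝[>] (0:ℝ)) (𝓝 (0:ℝ)) := by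
          have := ((continuous_pow (n+1)).tendsto 0).mono_left
            (nhdsWithin_le_nhds (s := Ioi (0:ℝ)))
          simpa using this
        simpa using (this.const_mul 2).div_const (((n:ℝ)+1)^3)
      have h3 := this.add h2
      simp only [sub_zero, add_zero, zero_sub, zero_add, zero_div, mul_zero, zero_mul] at h3
      refine h3.congr (fun x => ?_)
      simp only [G]
      field_simp
    have hG0 : G n 0 = 0 := by simp [G]
    have : ContinuousWithinAt (G n) (Ici 0) 0 := by
      rw [← continuousWithinAt_Ioi_iff_Ici]
      unfold ContinuousWithinAt
      rw [hG0]
      exact ht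
    exact this.mono (fun y hy => hy.1)
  · -- x > 0
    have : ContinuousAt (G n) x := by
      unfold G
      fun_prop (disch := exact h0.ne')
    exact this.continuousWithinAt

lemma log_sq_le (x : ℝ) (hx : 0 < x) (hx1 : x ≤ 1) :
    Real.log x ^ 2 ≤ 16 * x ^ (-(1:ℝ)/2) := by
  have h4 : -Real.log x ≤ 4 * x ^ (-(1:ℝ)/4) := by
    have h1 : Real.log (x ^ (-(1:ℝ)/4)) ≤ x ^ (-(1:ℝ)/4) - 1 :=
      Real.log_le_sub_one_of_pos (Real.rpow_pos_of_pos hx _)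
    rw [Real.log_rpow hx] at h1
    nlinarith [Real.rpow_pos_of_pos hx (-(1:ℝ)/4)]
  have hl : 0 ≤ -Real.log x := by
    simpa using Real.log_nonpos hx.le hx1
  have : Real.log x ^ 2 = (-Real.log x) ^ 2 := by ring
  rw [this]
  calc (-Real.log x) ^ 2 ≤ (4 * x ^ (-(1:ℝ)/4)) ^ 2 := by
        apply pow_le_pow_left₀ hl h4
    _ = 16 * x ^ (-(1:ℝ)/2) := by
        rw [mul_pow, ← Real.rpow_natCast (x ^ (-(1:ℝ)/4)) 2, ← Real.rpow_mul hx.le]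
        norm_num

lemma integrableOn_pow_log_sq (n : ℕ) :
    IntegrableOn (fun x : ℝ => x ^ n * Real.log x ^ 2) (Ioc 0 1) := by
  have hbig : IntegrableOn (fun x : ℝ => 16 * x ^ (-(1:ℝ)/2)) (Ioc 0 1) := by
    have := (intervalIntegral.intervalIntegrable_rpow' (a := 0) (b := 1)
      (by norm_num : (-1:ℝ) < -1/2)).const_mul 16
    rw [intervalIntegrable_iff_integrableOn_Ioc_of_le (by norm_num : (0:ℝ) ≤ 1)] at this
    simpa [neg_div] using this
  apply hbig.mono' ?_ ?_
  · apply (Measurable.aestronglyMeasurable ?_).restrict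
    exact (measurable_id.pow_const n).mul (Real.measurable_log.pow_const 2)
  · filter_upwards [ae_restrict_mem measurableSet_Ioc] with x hx
    have hx0 := hx.1
    have hx1 := hx.2
    have h1 : x ^ n ≤ 1 := pow_le_one₀ hx0.le hx1
    have h2 : (0:ℝ) ≤ Real.log x ^ 2 := sq_nonneg _
    rw [Real.norm_eq_abs, abs_of_nonneg (by positivity)]
    calc x ^ n * Real.log x ^ 2 ≤ 1 * Real.log x ^ 2 := by
          exact mul_le_mul_of_nonneg_right h1 h2
      _ = Real.log x ^ 2 := one_mul _
      _ ≤ 16 * x ^ (-(1:ℝ)/2) := log_sq_le x hx0 hx1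

lemma integral_pow_log_sq (n : ℕ) :
    ∫ x in Ioc (0:ℝ) 1, x ^ n * Real.log x ^ 2 = 2 / ((n:ℝ)+1)^3 := by
  have hi : IntervalIntegrable (fun x : ℝ => x ^ n * Real.log x ^ 2) volume 0 1 := by
    rw [intervalIntegrable_iff_integrableOn_Ioc_of_le (by norm_num : (0:ℝ) ≤ 1)]
    exact integrableOn_pow_log_sq n
  have := intervalIntegral.integral_eq_sub_of_hasDeriv_right_of_le (by norm_num : (0:ℝ) ≤ 1)
    (G_cont n) (fun x hx => ((G_deriv n hx.1).hasDerivWithinAt)) hi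
  rw [intervalIntegral.integral_of_le (by norm_num : (0:ℝ) ≤ 1)] at this
  rw [this]
  have h1 : G n 1 = 2 / ((n:ℝ)+1)^3 := by simp [G]
  have h0 : G n 0 = 0 := by simp [G]
  rw [h1, h0, sub_zero]

noncomputable def aa : ℕ → ℝ := fun n => if n % 6 = 0 then 1 else if n % 6 = 1 then -1 else 0

lemma hasSum_aa_geom {x : ℝ} (hx : x ∈ Ioo (0:ℝ) 1) :
    HasSum (fun n : ℕ => aa n * x ^ n) ((1 - x) / (1 - x ^ 6)) := by
  have hx6 : |x ^ 6| < 1 := by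
    rw [abs_of_nonneg (by positivity)]
    exact pow_lt_one₀ hx.1.le hx.2 (by norm_num)
  have hgeom : HasSum (fun j : ℕ => (x ^ 6) ^ j) (1 - x ^ 6)⁻¹ :=
    hasSum_geometric_of_abs_lt_one hx6
  have hne : (1 : ℝ) - x ^ 6 ≠ 0 := by
    have : x ^ 6 < 1 := pow_lt_one₀ hx.1.le hx.2 (by norm_num)
    linarith
  set g : ℕ → ℝ := fun n => if n % 6 = 0 then x ^ n else 0 with hgdef
  set h : ℕ → ℝ := fun n => if n % 6 = 1 then x ^ n else 0 with hhdef
  have hg : HasSum g (1 - x ^ 6)⁻¹ := by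
    have hinj : Function.Injective (fun j : ℕ => 6 * j) := fun a b hab => by dsimp only at hab; omega
    rw [← hinj.hasSum_iff (by
      intro m hm
      simp only [hgdef]
      rw [if_neg]
      intro hmod
      exact hm ⟨m / 6, show 6 * (m/6) = m by omega⟩)]
    refine hgeom.congr_fun fun j => ?_
    simp [hgdef, Nat.mul_mod_right, pow_mul]
  have hh : HasSum h (x * (1 - x ^ 6)⁻¹) := by
    have hinj : Function.Injective (fun j : ℕ => 6 * j + 1) := fun a b hab => by dsimp only at hab; omega
    rw [← hinj.hasSum_iff (by
      intro m hm
      simp only [hhdef]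
      rw [if_neg]
      intro hmod
      exact hm ⟨m / 6, show 6 * (m/6) + 1 = m by omega⟩)]
    refine (hgeom.mul_left x).congr_fun fun j => ?_
    have : (6 * j + 1) % 6 = 1 := by omega
    simp [hhdef, this, pow_succ, pow_mul]
    ring
  have := hg.sub hh
  have hval : (1 - x ^ 6)⁻¹ - x * (1 - x ^ 6)⁻¹ = (1 - x) / (1 - x ^ 6) := by
    field_simp
  rw [hval] at this
  refine this.congr_fun fun n => ?_
  simp only [hgdef, hhdef, aa]
  rcases Nat.lt_or_ge (n % 6) 2 with h2 | h2
  · rcases Nat.lt_or_ge (n % 6) 1 with h1 | h1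
    · have e0 : n % 6 = 0 := by omega
      simp [e0]
    · have e1 : n % 6 = 1 := by omega
      simp [e1]
  · have e0 : n % 6 ≠ 0 := by omega
    have e1 : n % 6 ≠ 1 := by omega
    simp [e0, e1]

lemma summable_cube : Summable (fun k : ℕ => 1 / ((k:ℝ)+1)^3) := by
  have := Real.summable_one_div_nat_pow.mpr (by norm_num : 1 < 3)
  have h2 := (summable_nat_add_iff 1).mpr this
  refine h2.congr fun k => ?_
  push_cast
  ring_nf

lemma hasSum_mod (m : ℕ) (hm : 0 < m) :
    HasSum (fun n : ℕ => if (n+1) % m = 0 then 1 / ((n:ℝ)+1)^3 else 0)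
      ((∑' k : ℕ, 1 / ((k:ℝ)+1)^3) / (m:ℝ)^3) := by
  have hZ : HasSum (fun k : ℕ => 1 / ((k:ℝ)+1)^3) (∑' k : ℕ, 1 / ((k:ℝ)+1)^3) :=
    summable_cube.hasSum
  have hpos : ∀ j : ℕ, 0 < m * (j + 1) := fun j => Nat.mul_pos hm j.succ_pos
  have hinj : Function.Injective (fun j : ℕ => m * (j + 1) - 1) := by
    intro a b hab; dsimp only at hab
    have h1 : m * (a+1) = m * (b+1) := by
      have ha := hpos a; have hb := hpos b; omega
    have := Nat.eq_of_mul_eq_mul_left hm h1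
    omega
  rw [← hinj.hasSum_iff (by
    intro n hn
    rw [if_neg]
    intro hmod
    obtain ⟨c, hc⟩ := Nat.dvd_of_mod_eq_zero hmod
    have hc1 : 1 ≤ c := by
      rcases Nat.eq_zero_or_pos c with rfl | h
      · omega
      · exact h
    refine hn ⟨c - 1, ?_⟩
    dsimp only
    have h2 : c - 1 + 1 = c := by omega
    rw [h2, ← hc]
    omega)]
  refine (hZ.div_const ((m:ℝ)^3)).congr_fun fun j => ?_
  have h1 : m * (j + 1) - 1 + 1 = m * (j + 1) := by have := hpos j; omega
  simp only [Function.comp_apply]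
  rw [if_pos (by rw [h1]; exact Nat.mul_mod_right m (j+1))]
  have h2 : ((m * (j + 1) - 1 : ℕ) : ℝ) + 1 = (m : ℝ) * ((j:ℝ) + 1) := by
    have := hpos j
    push_cast [Nat.cast_sub (by omega : 1 ≤ m * (j+1))]
    ring
  rw [h2]
  have hm' : (m:ℝ) ≠ 0 := Nat.cast_ne_zero.mpr hm.ne'
  have hj' : ((j:ℝ) + 1) ≠ 0 := by positivity
  field_simp

lemma bern3 : ((Polynomial.bernoulli 3).map (algebraMap ℚ ℝ)).eval (1/3 : ℝ) = 1/27 := by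
  simp [Polynomial.bernoulli, Finset.sum_range_succ, bernoulli_zero, bernoulli_one,
    bernoulli_eq_bernoulli'_of_ne_one, bernoulli'_two, bernoulli'_three]
  norm_num

lemma hasSum_sin3 : HasSum (fun n : ℕ => 1 / ((n:ℝ)) ^ 3 * Real.sin (2 * π * n * (1/3)))
    (2 * π ^ 3 / 81) := by
  have h := hasSum_one_div_nat_pow_mul_sin (k := 1) one_ne_zero
    (x := (1/3 : ℝ)) (by constructor <;> norm_num)
  have hb : ((Polynomial.bernoulli (2*1+1)).map (algebraMap ℚ ℝ)).eval (1/3 : ℝ) = 1/27 := bern3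
  rw [hb] at h
  have hv : ((-1:ℝ)) ^ (1 + 1) * (2 * π) ^ (2 * 1 + 1) / 2 / (Nat.factorial (2 * 1 + 1)) * (1/27)
      = 2 * π ^ 3 / 81 := by
    norm_num [Nat.factorial]
    ring
  rw [hv] at h
  convert h using 2

lemma sin_two_pi_div_three' : Real.sin (2 * π / 3) = Real.sqrt 3 / 2 := by
  have : (2:ℝ) * π / 3 = π - π / 3 := by ring
  rw [this, Real.sin_pi_sub, Real.sin_pi_div_three]

lemma sin_four_pi_div_three' : Real.sin (4 * π / 3) = -(Real.sqrt 3 / 2) := by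
  have : (4:ℝ) * π / 3 = π / 3 + π := by ring
  rw [this, Real.sin_add_pi, Real.sin_pi_div_three]

lemma hasSum_sin3' : HasSum (fun n : ℕ => 1 / ((n:ℝ)+1) ^ 3 * Real.sin (2 * π * ((n:ℝ)+1) * (1/3)))
    (2 * π ^ 3 / 81) := by
  have h := (hasSum_nat_add_iff (f := fun n : ℕ => 1 / ((n:ℝ)) ^ 3 * Real.sin (2 * π * n * (1/3)))
    1 (g := 2 * π ^ 3 / 81))
  have h0 : ∑ i ∈ Finset.range 1,
      (1 / ((i:ℝ)) ^ 3 * Real.sin (2 * π * i * (1/3))) = 0 := by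
    simp
  rw [h0, add_zero] at h
  have := h.mpr hasSum_sin3
  refine this.congr_fun fun n => ?_
  push_cast
  ring_nf

lemma key (n : ℕ) :
    aa n * (2 / ((n:ℝ)+1)^3) =
      (2 / Real.sqrt 3) * (1 / ((n:ℝ)+1)^3 * Real.sin (2*π*((n:ℝ)+1)*(1/3)))
      + 1 / ((n:ℝ)+1)^3
      - 2 * (if (n+1) % 2 = 0 then 1/((n:ℝ)+1)^3 else 0)
      - (if (n+1) % 3 = 0 then 1/((n:ℝ)+1)^3 else 0)
      + 2 * (if (n+1) % 6 = 0 then 1/((n:ℝ)+1)^3 else 0) := by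
  have hs3 : Real.sqrt 3 ≠ 0 := by positivity
  have hs3' : Real.sqrt 3 * Real.sqrt 3 = 3 := Real.mul_self_sqrt (by norm_num)
  have hm : ((n:ℝ)+1) ≠ 0 := by positivity
  obtain ⟨q, r, hr, rfl⟩ : ∃ q r, r < 6 ∧ n = 6*q + r := ⟨n/6, n%6, by omega, by omega⟩
  interval_cases r
  · have hsin : Real.sin (2*π*(((6*q+0:ℕ):ℝ)+1)*(1/3)) = Real.sqrt 3 / 2 := by
      have harg : 2*π*(((6*q+0:ℕ):ℝ)+1)*(1/3) = 2*π/3 + ((2*q:ℤ)) * (2*π) := by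
        push_cast; ring
      rw [harg, Real.sin_add_int_mul_two_pi, sin_two_pi_div_three']
    rw [hsin]
    simp only [aa, if_pos (by omega : (6*q+0) % 6 = 0),
      if_neg (by omega : ¬ (6*q+0+1) % 2 = 0), if_neg (by omega : ¬ (6*q+0+1) % 3 = 0),
      if_neg (by omega : ¬ (6*q+0+1) % 6 = 0)]
    field_simp
    ring
  · have hsin : Real.sin (2*π*(((6*q+1:ℕ):ℝ)+1)*(1/3)) = -(Real.sqrt 3 / 2) := by
      have harg : 2*π*(((6*q+1:ℕ):ℝ)+1)*(1/3) = 4*π/3 + ((2*q:ℤ)) * (2*π) := by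
        push_cast; ring
      rw [harg, Real.sin_add_int_mul_two_pi, sin_four_pi_div_three']
    rw [hsin]
    simp only [aa, if_neg (by omega : ¬ (6*q+1) % 6 = 0), if_pos (by omega : (6*q+1) % 6 = 1),
      if_pos (by omega : (6*q+1+1) % 2 = 0), if_neg (by omega : ¬ (6*q+1+1) % 3 = 0),
      if_neg (by omega : ¬ (6*q+1+1) % 6 = 0)]
    field_simp
    ring
  · have hsin : Real.sin (2*π*(((6*q+2:ℕ):ℝ)+1)*(1/3)) = 0 := by
      have harg : 2*π*(((6*q+2:ℕ):ℝ)+1)*(1/3) = 0 + ((2*q+1:ℤ)) * (2*π) := by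
        push_cast; ring
      rw [harg, Real.sin_add_int_mul_two_pi, Real.sin_zero]
    rw [hsin]
    simp only [aa, if_neg (by omega : ¬ (6*q+2) % 6 = 0), if_neg (by omega : ¬ (6*q+2) % 6 = 1),
      if_neg (by omega : ¬ (6*q+2+1) % 2 = 0), if_pos (by omega : (6*q+2+1) % 3 = 0),
      if_neg (by omega : ¬ (6*q+2+1) % 6 = 0)]
    ring
  · have hsin : Real.sin (2*π*(((6*q+3:ℕ):ℝ)+1)*(1/3)) = Real.sqrt 3 / 2 := by
      have harg : 2*π*(((6*q+3:ℕ):ℝ)+1)*(1/3) = 2*π/3 + ((2*q+1:ℤ)) * (2*π) := by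
        push_cast; ring
      rw [harg, Real.sin_add_int_mul_two_pi, sin_two_pi_div_three']
    rw [hsin]
    simp only [aa, if_neg (by omega : ¬ (6*q+3) % 6 = 0), if_neg (by omega : ¬ (6*q+3) % 6 = 1),
      if_pos (by omega : (6*q+3+1) % 2 = 0), if_neg (by omega : ¬ (6*q+3+1) % 3 = 0),
      if_neg (by omega : ¬ (6*q+3+1) % 6 = 0)]
    field_simp
    ring
  · have hsin : Real.sin (2*π*(((6*q+4:ℕ):ℝ)+1)*(1/3)) = -(Real.sqrt 3 / 2) := by
      have harg : 2*π*(((6*q+4:ℕ):ℝ)+1)*(1/3) = 4*π/3 + ((2*q+1:ℤ)) * (2*π) := by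
        push_cast; ring
      rw [harg, Real.sin_add_int_mul_two_pi, sin_four_pi_div_three']
    rw [hsin]
    simp only [aa, if_neg (by omega : ¬ (6*q+4) % 6 = 0), if_neg (by omega : ¬ (6*q+4) % 6 = 1),
      if_neg (by omega : ¬ (6*q+4+1) % 2 = 0), if_neg (by omega : ¬ (6*q+4+1) % 3 = 0),
      if_neg (by omega : ¬ (6*q+4+1) % 6 = 0)]
    field_simp
    ring
  · have hsin : Real.sin (2*π*(((6*q+5:ℕ):ℝ)+1)*(1/3)) = 0 := by
      have harg : 2*π*(((6*q+5:ℕ):ℝ)+1)*(1/3) = 0 + ((2*q+2:ℤ)) * (2*π) := by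
        push_cast; ring
      rw [harg, Real.sin_add_int_mul_two_pi, Real.sin_zero]
    rw [hsin]
    simp only [aa, if_neg (by omega : ¬ (6*q+5) % 6 = 0), if_neg (by omega : ¬ (6*q+5) % 6 = 1),
      if_pos (by omega : (6*q+5+1) % 2 = 0), if_pos (by omega : (6*q+5+1) % 3 = 0),
      if_pos (by omega : (6*q+5+1) % 6 = 0)]
    ring

theorem stmt15 :
    ∫ x in (0:ℝ)..1, (1 - x) / (1 - x ^ 6) * Real.log x ^ 2 =
      (8 * Real.sqrt 3 * Real.pi ^ 3 + 351 * ∑' k : ℕ, 1 / ((k : ℝ) + 1) ^ 3) / 486 := by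
  have hs3 : Real.sqrt 3 ≠ 0 := by positivity
  have hs3' : Real.sqrt 3 * Real.sqrt 3 = 3 := Real.mul_self_sqrt (by norm_num)
  set Z := ∑' k : ℕ, 1 / ((k:ℝ)+1)^3 with hZdef
  -- the series value
  have hT : HasSum (fun n : ℕ => aa n * (2 / ((n:ℝ)+1)^3))
      ((8 * Real.sqrt 3 * π^3 + 351 * Z) / 486) := by
    have h1 := hasSum_sin3'.mul_left (2 / Real.sqrt 3)
    have h2 := summable_cube.hasSum
    have h3 := (hasSum_mod 2 (by norm_num)).mul_left 2
    have h4 := hasSum_mod 3 (by norm_num)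
    have h5 := (hasSum_mod 6 (by norm_num)).mul_left 2
    have H := (((h1.add h2).sub h3).sub h4).add h5
    have hval : 2 / Real.sqrt 3 * (2 * π ^ 3 / 81) + Z - 2 * (Z / (2:ℕ)^3)
        - Z / (3:ℕ)^3 + 2 * (Z / (6:ℕ)^3) = (8 * Real.sqrt 3 * π^3 + 351 * Z) / 486 := by
      push_cast
      field_simp
      linear_combination (-(15116544:ℝ) * π^3) * hs3'
    rw [hval] at H
    exact H.congr_fun fun n => key n
  -- per-term integrals on Ioo
  have hIoo : ∀ n : ℕ, ∫ x in Ioo (0:ℝ) 1, x ^ n * Real.log x ^ 2 = 2 / ((n:ℝ)+1)^3 := by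
    intro n
    rw [← integral_Ioc_eq_integral_Ioo]
    exact integral_pow_log_sq n
  have hintIoo : ∀ n : ℕ, IntegrableOn (fun x : ℝ => x ^ n * Real.log x ^ 2) (Ioo 0 1) :=
    fun n => (integrableOn_pow_log_sq n).mono_set Ioo_subset_Ioc_self
  have hF_int : ∀ n : ℕ, Integrable (fun x : ℝ => aa n * (x ^ n * Real.log x ^ 2))
      (volume.restrict (Ioo 0 1)) := fun n => (hintIoo n).const_mul (aa n)
  have hF_int_val : ∀ n : ℕ, ∫ x in Ioo (0:ℝ) 1, aa n * (x ^ n * Real.log x ^ 2)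
      = aa n * (2 / ((n:ℝ)+1)^3) := by
    intro n
    rw [MeasureTheory.integral_const_mul, hIoo n]
  have hF_norm : ∀ n : ℕ, ∫ x in Ioo (0:ℝ) 1, ‖aa n * (x ^ n * Real.log x ^ 2)‖
      = |aa n| * (2 / ((n:ℝ)+1)^3) := by
    intro n
    have : ∫ x in Ioo (0:ℝ) 1, ‖aa n * (x ^ n * Real.log x ^ 2)‖
        = ∫ x in Ioo (0:ℝ) 1, |aa n| * (x ^ n * Real.log x ^ 2) := by
      refine setIntegral_congr_fun measurableSet_Ioo (fun x hx => ?_)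
      rw [Real.norm_eq_abs, abs_mul, abs_of_nonneg (mul_nonneg (pow_nonneg hx.1.le n) (sq_nonneg _))]
    rw [this, MeasureTheory.integral_const_mul, hIoo n]
  have haabd : ∀ n : ℕ, |aa n| ≤ 1 := by
    intro n
    unfold aa
    split_ifs <;> norm_num
  have hF_sum : Summable (fun n : ℕ => ∫ x in Ioo (0:ℝ) 1, ‖aa n * (x ^ n * Real.log x ^ 2)‖) := by
    refine Summable.of_nonneg_of_le (fun n => ?_) (fun n => ?_)
      ((summable_cube.mul_left 2).congr (fun n => by rw [mul_one_div]))
    · exact MeasureTheory.integral_nonneg (fun x => norm_nonneg _)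
    · rw [hF_norm n]
      have h2 : (0:ℝ) ≤ 2 / ((n:ℝ)+1)^3 := by positivity
      calc |aa n| * (2 / ((n:ℝ)+1)^3) ≤ 1 * (2 / ((n:ℝ)+1)^3) :=
            mul_le_mul_of_nonneg_right (haabd n) h2
        _ = 2 / ((n:ℝ)+1)^3 := one_mul _
  have hswap := MeasureTheory.integral_tsum_of_summable_integral_norm hF_int hF_sum
  -- assemble
  rw [intervalIntegral.integral_of_le (by norm_num : (0:ℝ) ≤ 1), integral_Ioc_eq_integral_Ioo]
  have hcongr : ∫ x in Ioo (0:ℝ) 1, (1 - x) / (1 - x ^ 6) * Real.log x ^ 2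
      = ∫ x in Ioo (0:ℝ) 1, ∑' n : ℕ, aa n * (x ^ n * Real.log x ^ 2) := by
    refine setIntegral_congr_fun measurableSet_Ioo (fun x hx => ?_)
    have := ((hasSum_aa_geom hx).mul_right (Real.log x ^ 2)).congr_fun
      (fun n => (mul_assoc (aa n) (x ^ n) (Real.log x ^ 2)).symm)
    exact this.tsum_eq.symm
  rw [hcongr, ← hswap]
  calc ∑' n : ℕ, ∫ x in Ioo (0:ℝ) 1, aa n * (x ^ n * Real.log x ^ 2)
      = ∑' n : ℕ, aa n * (2 / ((n:ℝ)+1)^3) := by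
        exact tsum_congr fun n => hF_int_val n
    _ = (8 * Real.sqrt 3 * π^3 + 351 * Z) / 486 := hT.tsum_eq
end
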